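/- arXiv:1309.6423 — 2 statements merged into one kernel-verified Lean document; each statement's English description precedes it below -/
import Mathlib

section
/- Špaček–Robertson spirallikeness criterion: let α ∈ (−π/2, π/2) and let f be holomorphic on 𝔻 with f(0) = 0, f'(0) = 1, and f(z) ≠ 0 for z ≠ 0. Then f is spirallike of type α (in particular univalent) if and only if Re( e^{iα} · z f'(z)/f(z) ) > 0 for all z ∈ 𝔻 \ {0}. -/
open Complex Metric Set

noncomputable section

/-- `f` is spirallike of type `α ∈ (−π/2, π/2)`: `f` is injective on the unit disk and
for every `w ∈ f(𝔻)` and every `τ ≥ 0`, `w·exp(−e^{−iα}τ) ∈ f(𝔻)`. -/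
def SpirallikeOfType (α : ℝ) (f : ℂ → ℂ) : Prop :=
  Set.InjOn f (Metric.ball 0 1) ∧
    ∀ w ∈ f '' Metric.ball (0 : ℂ) 1, ∀ τ : ℝ, 0 ≤ τ →
      w * Complex.exp (-(Complex.exp (-(Complex.I * (α : ℂ))) * (τ : ℂ))) ∈
        f '' Metric.ball (0 : ℂ) 1

namespace Spacek

open Filter

/-- The unit ball -/

local notation "B" => Metric.ball (0:ℂ) 1


/-- f z / z extended by 1 at 0 (value 1 correct when f 0 = 0, f' 0 = 1). -/

def hfun (f : ℂ → ℂ) (z : ℂ) : ℂ := if z = 0 then 1 else f z / z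


lemma hfun_zero (f : ℂ → ℂ) : hfun f 0 = 1 := by simp [hfun]


lemma hfun_of_ne (f : ℂ → ℂ) {z : ℂ} (hz : z ≠ 0) : hfun f z = f z / z := by simp [hfun, hz]


variable {f : ℂ → ℂ} {α : ℝ}


lemma f_eq_mul_hfun (h0 : f 0 = 0) (z : ℂ) : f z = z * hfun f z := by
  rcases eq_or_ne z 0 with rfl | hz
  · simp [h0]
  · rw [hfun_of_ne f hz]; field_simp


lemma hfun_continuousAt_zero (hf : DifferentiableOn ℂ f B) (h0 : f 0 = 0)
    (h1 : deriv f 0 = 1) : ContinuousAt (hfun f) 0 := by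
  have hd : HasDerivAt f 1 0 := by
    have := (hf.differentiableAt (Metric.isOpen_ball.mem_nhds (Metric.mem_ball_self one_pos))).hasDerivAt
    rwa [h1] at this
  have hslope := hasDerivAt_iff_tendsto_slope.mp hd
  have : Filter.Tendsto (hfun f) (nhdsWithin 0 {(0:ℂ)}ᶜ) (nhds 1) := by
    refine hslope.congr' ?_
    filter_upwards [self_mem_nhdsWithin] with z hz
    simp only [mem_compl_iff, mem_singleton_iff] at hz
    simp [slope, hfun_of_ne f hz, h0, sub_zero, smul_eq_mul, div_eq_inv_mul]
  rw [← continuousWithinAt_compl_self, ContinuousWithinAt, hfun_zero]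
  exact this


lemma hfun_differentiableOn (hf : DifferentiableOn ℂ f B) (h0 : f 0 = 0)
    (h1 : deriv f 0 = 1) : DifferentiableOn ℂ (hfun f) B := by
  intro z hz
  rcases eq_or_ne z 0 with rfl | hz0
  · have : AnalyticAt ℂ (hfun f) 0 := by
      apply Complex.analyticAt_of_differentiable_on_punctured_nhds_of_continuousAt
      · filter_upwards [self_mem_nhdsWithin,
          nhdsWithin_le_nhds (Metric.isOpen_ball.mem_nhds (Metric.mem_ball_self one_pos))] with w hw hwB
        simp only [mem_compl_iff, mem_singleton_iff] at hw
        have : DifferentiableAt ℂ (fun z => f z / z) w :=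
          (hf.differentiableAt (Metric.isOpen_ball.mem_nhds hwB)).div differentiableAt_id hw
        apply this.congr_of_eventuallyEq
        filter_upwards [isOpen_compl_singleton.mem_nhds hw] with u hu
        simp [hfun_of_ne f hu]
      · exact hfun_continuousAt_zero hf h0 h1
    exact this.differentiableAt.differentiableWithinAt
  · have : DifferentiableAt ℂ (hfun f) z := by
      have : DifferentiableAt ℂ (fun z => f z / z) z :=
        (hf.differentiableAt (Metric.isOpen_ball.mem_nhds hz)).div differentiableAt_id hz0
      apply this.congr_of_eventuallyEq
      filter_upwards [isOpen_compl_singleton.mem_nhds hz0] with u hu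
      simp [hfun_of_ne f hu]
    exact this.differentiableWithinAt


lemma hfun_ne_zero (hnz : ∀ z ∈ B, z ≠ 0 → f z ≠ 0) {z : ℂ} (hz : z ∈ B) :
    hfun f z ≠ 0 := by
  rcases eq_or_ne z 0 with rfl | hz0
  · simp [hfun_zero]
  · rw [hfun_of_ne f hz0]
    exact div_ne_zero (hnz z hz hz0) hz0


/-- extended `e^{iα} z f'(z) / f(z)`. -/

def Qfun (f : ℂ → ℂ) (α : ℝ) (z : ℂ) : ℂ :=
  Complex.exp (Complex.I * (α:ℂ)) * deriv f z / hfun f z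


lemma hasDerivAt_of_mem (hf : DifferentiableOn ℂ f B) {z : ℂ} (hz : z ∈ B) :
    HasDerivAt f (deriv f z) z :=
  (hf.differentiableAt (Metric.isOpen_ball.mem_nhds hz)).hasDerivAt


lemma deriv_differentiableOn (hf : DifferentiableOn ℂ f B) :
    DifferentiableOn ℂ (deriv f) B := by
  have := (hf.analyticOnNhd Metric.isOpen_ball).deriv
  exact this.differentiableOn


lemma Qfun_zero (h1 : deriv f 0 = 1) : Qfun f α 0 = Complex.exp (Complex.I * (α:ℂ)) := by
  simp [Qfun, hfun, h1]


lemma Qfun_eq (h0 : f 0 = 0) {z : ℂ} (hz0 : z ≠ 0) (hfz : f z ≠ 0) :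
    Qfun f α z = Complex.exp (Complex.I * (α:ℂ)) * z * deriv f z / f z := by
  have hzh : f z = z * hfun f z := by rw [hfun]; simp [hz0]; field_simp
  have hh : hfun f z ≠ 0 := by
    intro h; rw [hzh, h, mul_zero] at hfz; exact hfz rfl
  rw [Qfun, hzh]
  field_simp


lemma conj_exp_I_mul (α : ℝ) :
    (starRingEnd ℂ) (Complex.exp (Complex.I * (α:ℂ))) = Complex.exp (-(Complex.I * (α:ℂ))) := by
  rw [← Complex.exp_conj]; congr 1; simp


lemma conj_exp_neg_I_mul (α : ℝ) :
    (starRingEnd ℂ) (Complex.exp (-(Complex.I * (α:ℂ)))) = Complex.exp (Complex.I * (α:ℂ)) := by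
  rw [← Complex.exp_conj]; congr 1; simp


lemma key_identity (h0 : f 0 = 0) {z : ℂ} (hh : hfun f z ≠ 0) (hd : deriv f z ≠ 0) :
    Complex.exp (Complex.I * (α:ℂ)) * z * (starRingEnd ℂ) (f z) / (starRingEnd ℂ) (deriv f z)
      = Qfun f α z * ((Complex.normSq (hfun f z / deriv f z) : ℝ) : ℂ)
          * ((Complex.normSq z : ℝ) : ℂ) := by
  have hzh : f z = z * hfun f z := by
    rcases eq_or_ne z 0 with rfl | hz0
    · simp [h0]
    · rw [hfun]; simp [hz0]; field_simp
  have hdc : (starRingEnd ℂ) (deriv f z) ≠ 0 := by simpa using hd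
  rw [Qfun, hzh]
  rw [Complex.normSq_div, Complex.ofReal_div]
  rw [Complex.normSq_eq_conj_mul_self, Complex.normSq_eq_conj_mul_self,
    Complex.normSq_eq_conj_mul_self]
  push_cast
  rw [map_mul]
  field_simp


/-- The central real-part identity: `Re(conj z * V z) = -(r₁ * r₂ * Re (Q z))`

where `V z = -(e^{-iα} f z / f' z)` and `r₁, r₂ ≥ 0`. -/

lemma re_conj_mul_V (h0 : f 0 = 0) {z : ℂ} (hh : hfun f z ≠ 0) (hd : deriv f z ≠ 0) :
    ((starRingEnd ℂ) z * (-(Complex.exp (-(Complex.I * (α:ℂ))) * f z / deriv f z))).re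
      = -(Complex.normSq (hfun f z / deriv f z) * Complex.normSq z * (Qfun f α z).re) := by
  have key := key_identity (α := α) h0 hh hd
  have hre : ((starRingEnd ℂ) z * (-(Complex.exp (-(Complex.I * (α:ℂ))) * f z / deriv f z))).re
      = ((starRingEnd ℂ) ((starRingEnd ℂ) z *
          (-(Complex.exp (-(Complex.I * (α:ℂ))) * f z / deriv f z)))).re := by
    rw [Complex.conj_re]
  rw [hre]
  have : (starRingEnd ℂ) ((starRingEnd ℂ) z *
          (-(Complex.exp (-(Complex.I * (α:ℂ))) * f z / deriv f z)))
      = -(Complex.exp (Complex.I * (α:ℂ)) * z * (starRingEnd ℂ) (f z)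
            / (starRingEnd ℂ) (deriv f z)) := by
    rw [map_mul, map_neg, map_div₀, map_mul, conj_exp_neg_I_mul, Complex.conj_conj]
    ring
  rw [this, key]
  simp [Complex.mul_re, Complex.ofReal_re, Complex.ofReal_im]
  ring


lemma Qfun_differentiableOn (hf : DifferentiableOn ℂ f B) (h0 : f 0 = 0)
    (h1 : deriv f 0 = 1) (hnz : ∀ z ∈ B, z ≠ 0 → f z ≠ 0) :
    DifferentiableOn ℂ (Qfun f α) B := by
  exact ((differentiableOn_const _ |>.mul (deriv_differentiableOn hf)).div
    (hfun_differentiableOn hf h0 h1) (fun z hz => hfun_ne_zero hnz hz))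


lemma re_Qfun_zero (h1 : deriv f 0 = 1) : (Qfun f α 0).re = Real.cos α := by
  rw [Qfun_zero h1, mul_comm, Complex.exp_ofReal_mul_I_re]


lemma re_Qfun_zero_pos (h1 : deriv f 0 = 1)
    (hα : α ∈ Set.Ioo (-(Real.pi / 2)) (Real.pi / 2)) : 0 < (Qfun f α 0).re := by
  rw [re_Qfun_zero h1]
  exact Real.cos_pos_of_mem_Ioo ⟨by linarith [hα.1], hα.2⟩


/-- Minimum principle upgrade: if `Re Q ≥ 0` on the ball and `Re Q 0 > 0`,

then `Re Q > 0` everywhere on the ball. -/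

lemma re_Qfun_pos_of_nonneg (hf : DifferentiableOn ℂ f B) (h0 : f 0 = 0)
    (h1 : deriv f 0 = 1) (hnz : ∀ z ∈ B, z ≠ 0 → f z ≠ 0)
    (hα : α ∈ Set.Ioo (-(Real.pi / 2)) (Real.pi / 2))
    (hge : ∀ z ∈ B, 0 ≤ (Qfun f α z).re) :
    ∀ z ∈ B, 0 < (Qfun f α z).re := by
  intro z₁ hz₁
  by_contra hle
  push_neg at hle
  have hz1eq : (Qfun f α z₁).re = 0 := le_antisymm hle (hge z₁ hz₁)
  set g : ℂ → ℂ := fun z => Complex.exp (-(Qfun f α z)) with hg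
  have hgd : DifferentiableOn ℂ g B := (Qfun_differentiableOn hf h0 h1 hnz).neg.cexp
  have hnorm : ∀ z ∈ B, ‖g z‖ = Real.exp (-(Qfun f α z).re) := by
    intro z hz; simp [hg, Complex.norm_exp]
  have hmax : IsMaxOn (norm ∘ g) B z₁ := by
    intro z hz
    simp only [Function.comp_apply, mem_setOf_eq]
    rw [hnorm z hz, hnorm z₁ hz₁, hz1eq]
    exact Real.exp_le_exp.mpr (by linarith [hge z hz])
  have := Complex.norm_eqOn_of_isPreconnected_of_isMaxOn
    (convex_ball (0:ℂ) 1).isPreconnected Metric.isOpen_ball hgd hz₁ hmax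
  have h00 : ‖g 0‖ = ‖g z₁‖ := this (Metric.mem_ball_self one_pos)
  rw [hnorm 0 (Metric.mem_ball_self one_pos), hnorm z₁ hz₁, hz1eq, Real.exp_eq_exp] at h00
  have : (Qfun f α 0).re = 0 := by linarith
  have := re_Qfun_zero_pos (α := α) h1 hα
  linarith

lemma analyticAt_of_mem (hf : DifferentiableOn ℂ f B) {z : ℂ} (hz : z ∈ B) :
    AnalyticAt ℂ f z :=
  hf.analyticAt (Metric.isOpen_ball.mem_nhds hz)


lemma hasDerivAt_of_mem' (hf : DifferentiableOn ℂ f B) {z : ℂ} (hz : z ∈ B) :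
    HasDerivAt f (deriv f z) z :=
  (hf.differentiableAt (Metric.isOpen_ball.mem_nhds hz)).hasDerivAt


lemma not_eventually_const (inj : Set.InjOn f B) {z₀ : ℂ} (hz₀ : z₀ ∈ B) :
    ¬ (∀ᶠ z in nhds z₀, f z = f z₀) := by
  intro h
  obtain ⟨ε, hε, hball⟩ := Metric.eventually_nhds_iff_ball.mp
    (h.and (Metric.isOpen_ball.eventually_mem hz₀))
  set z₁ : ℂ := z₀ + ((ε / 2 : ℝ) : ℂ) with hz₁
  have hmem : z₁ ∈ Metric.ball z₀ ε := by
    simp only [hz₁, Metric.mem_ball, dist_self_add_left, Complex.norm_real,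
      Real.norm_eq_abs, abs_of_pos (by positivity : (0:ℝ) < ε / 2)]
    linarith
  have heq := inj (hball z₁ hmem).2 hz₀ (hball z₁ hmem).1
  rw [hz₁, add_eq_left] at heq
  norm_num at heq
  linarith


lemma nhds_le_map (hf : DifferentiableOn ℂ f B) (inj : Set.InjOn f B)
    {z₀ : ℂ} (hz₀ : z₀ ∈ B) : nhds (f z₀) ≤ Filter.map f (nhds z₀) := by
  rcases (analyticAt_of_mem hf hz₀).eventually_constant_or_nhds_le_map_nhds with h | h
  · exact absurd h (not_eventually_const inj hz₀)
  · exact h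


lemma image_mem_nhds (hf : DifferentiableOn ℂ f B) (inj : Set.InjOn f B)
    {z₀ : ℂ} (hz₀ : z₀ ∈ B) {U : Set ℂ} (hU : U ∈ nhds z₀) :
    f '' U ∈ nhds (f z₀) :=
  nhds_le_map hf inj hz₀ (Filter.image_mem_map hU)


variable (f) in

def ginv : ℂ → ℂ := Function.invFunOn f B


lemma ginv_f (inj : Set.InjOn f B) {z : ℂ} (hz : z ∈ B) : ginv f (f z) = z :=
  inj.leftInvOn_invFunOn hz


lemma f_ginv {w : ℂ} (hw : w ∈ f '' B) : f (ginv f w) = w := by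
  obtain ⟨z, hz, rfl⟩ := hw
  exact Function.invFunOn_eq ⟨z, hz, rfl⟩


lemma ginv_mem {w : ℂ} (hw : w ∈ f '' B) : ginv f w ∈ B := by
  obtain ⟨z, hz, rfl⟩ := hw
  exact Function.invFunOn_mem ⟨z, hz, rfl⟩


lemma ginv_continuousAt (hf : DifferentiableOn ℂ f B) (inj : Set.InjOn f B)
    {z₀ : ℂ} (hz₀ : z₀ ∈ B) : ContinuousAt (ginv f) (f z₀) := by
  rw [ContinuousAt, ginv_f inj hz₀]
  intro U hU
  have : f '' (U ∩ B) ∈ nhds (f z₀) :=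
    image_mem_nhds hf inj hz₀ (Filter.inter_mem hU (Metric.isOpen_ball.mem_nhds hz₀))
  apply Filter.mem_of_superset this
  rintro w ⟨u, ⟨huU, huB⟩, rfl⟩
  simpa [Filter.mem_map, ginv_f inj huB] using huU


lemma ginv_hasDerivAt (hf : DifferentiableOn ℂ f B) (inj : Set.InjOn f B)
    {z₀ : ℂ} (hz₀ : z₀ ∈ B) (hd : deriv f z₀ ≠ 0) :
    HasDerivAt (ginv f) (deriv f z₀)⁻¹ (f z₀) := by
  have h1 : HasDerivAt f (deriv f z₀) (ginv f (f z₀)) := by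
    rw [ginv_f inj hz₀]; exact hasDerivAt_of_mem' hf hz₀
  have h2 : ∀ᶠ y in nhds (f z₀), f (ginv f y) = y := by
    filter_upwards [image_mem_nhds hf inj hz₀ (Metric.isOpen_ball.mem_nhds hz₀)] with w hw
    exact f_ginv hw
  exact HasDerivAt.of_local_left_inverse (ginv_continuousAt hf inj hz₀) h1 hd h2


lemma ginv_differentiableAt (hf : DifferentiableOn ℂ f B) (inj : Set.InjOn f B)
    {z₀ : ℂ} (hz₀ : z₀ ∈ B) : DifferentiableAt ℂ (ginv f) (f z₀) := by
  rcases eq_or_ne (deriv f z₀) 0 with hd | hd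
  swap
  · exact (ginv_hasDerivAt hf inj hz₀ hd).differentiableAt
  rcases (((hf.analyticOnNhd Metric.isOpen_ball).deriv) z₀ hz₀).eventually_eq_zero_or_eventually_ne_zero with h | h
  · -- deriv f ≡ 0 near z₀ : f locally constant, contradicting injectivity
    exfalso
    apply not_eventually_const inj hz₀
    obtain ⟨ε, hε, hb⟩ := Metric.eventually_nhds_iff_ball.mp
      (h.and (Metric.isOpen_ball.eventually_mem hz₀))
    have hdiff : DifferentiableOn ℂ f (Metric.ball z₀ ε) := fun x hx =>
      (hf.differentiableAt (Metric.isOpen_ball.mem_nhds (hb x hx).2)).differentiableWithinAt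
    have hconst : ∀ z ∈ Metric.ball z₀ ε, f z = f z₀ := by
      intro z hz
      apply (convex_ball z₀ ε).is_const_of_fderivWithin_eq_zero hdiff ?_ hz
        (Metric.mem_ball_self hε)
      intro x hx
      rw [fderivWithin_of_isOpen Metric.isOpen_ball hx]
      have hder : HasDerivAt f 0 x := by
        have := hasDerivAt_of_mem' hf (hb x hx).2
        rwa [(hb x hx).1] at this
      have := hder.hasFDerivAt.fderiv
      rw [this]
      ext y
      simp
    exact Metric.eventually_nhds_iff_ball.mpr ⟨ε, hε, hconst⟩
  · -- punctured neighborhood where deriv f ≠ 0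
    apply AnalyticAt.differentiableAt
    apply Complex.analyticAt_of_differentiable_on_punctured_nhds_of_continuousAt ?_
      (ginv_continuousAt hf inj hz₀)
    have hb' : ∀ᶠ z in nhds z₀, (z ≠ z₀ → deriv f z ≠ 0) ∧ z ∈ B := by
      refine Filter.Eventually.and ?_ (Metric.isOpen_ball.eventually_mem hz₀)
      rwa [eventually_nhdsWithin_iff] at h
    obtain ⟨ε, hε, hb⟩ := Metric.eventually_nhds_iff_ball.mp hb'
    have himg : f '' Metric.ball z₀ ε ∈ nhds (f z₀) :=
      image_mem_nhds hf inj hz₀ (Metric.ball_mem_nhds z₀ hε)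
    rw [eventually_nhdsWithin_iff]
    filter_upwards [himg] with w hw hwne
    obtain ⟨u, hu, rfl⟩ := hw
    have huB : u ∈ B := (hb u hu).2
    have hune : u ≠ z₀ := by
      rintro rfl; exact hwne rfl
    exact (ginv_hasDerivAt hf inj huB ((hb u hu).1 hune)).differentiableAt


/-- Schwarz: along the spiral, preimages shrink. -/

lemma schwarz_step (hf : DifferentiableOn ℂ f B) (h0 : f 0 = 0)
    (H : Set.InjOn f B ∧ ∀ w ∈ f '' B, ∀ τ : ℝ, 0 ≤ τ →
      w * Complex.exp (-(Complex.exp (-(Complex.I * (α : ℂ))) * (τ : ℂ))) ∈ f '' B)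
    {τ : ℝ} (hτ : 0 ≤ τ) {z : ℂ} (hz : z ∈ B) :
    ‖ginv f (f z * Complex.exp (-(Complex.exp (-(Complex.I * (α : ℂ))) * (τ : ℂ))))‖
      ≤ ‖z‖ := by
  obtain ⟨inj, hsp⟩ := H
  set c : ℂ := Complex.exp (-(Complex.exp (-(Complex.I * (α : ℂ))) * (τ : ℂ))) with hc
  have hmaps : ∀ u ∈ B, f u * c ∈ f '' B := fun u hu => hsp (f u) ⟨u, hu, rfl⟩ τ hτ
  set F : ℂ → ℂ := fun u => ginv f (f u * c) with hF
  have hdF : DifferentiableOn ℂ F B := by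
    intro u hu
    have h1 : DifferentiableAt ℂ (fun u => f u * c) u :=
      (hf.differentiableAt (Metric.isOpen_ball.mem_nhds hu)).mul_const c
    obtain ⟨v, hv, hveq⟩ := hmaps u hu
    have h2 : DifferentiableAt ℂ (ginv f) (f u * c) := by
      rw [← hveq]; exact ginv_differentiableAt hf inj hv
    exact (h2.comp u h1).differentiableWithinAt
  have hmapsF : MapsTo F B B := fun u hu => ginv_mem (hmaps u hu)
  have hF0 : F 0 = 0 := by
    have h2 : ginv f (f 0) = 0 := ginv_f inj (Metric.mem_ball_self one_pos)
    have h3 : f 0 * c = f 0 := by rw [h0, zero_mul]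
    show ginv f (f 0 * c) = 0
    rw [h3, h2]
  have := Complex.norm_le_norm_of_mapsTo_ball hdF (hmapsF.mono_right Metric.ball_subset_closedBall) hF0
    (mem_ball_zero_iff.mp hz)
  exact this


/-- The derivative of `normSq ∘ w`. -/

lemma hasDerivAt_normSq_comp {w : ℝ → ℂ} {d : ℂ} {t : ℝ} (hw : HasDerivAt w d t) :
    HasDerivAt (fun s => Complex.normSq (w s)) (2 * ((starRingEnd ℂ) (w t) * d).re) t := by
  have hre : HasDerivAt (fun s => (w s).re) d.re t :=
    (Complex.reCLM.hasFDerivAt.comp_hasDerivAt t hw)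
  have him : HasDerivAt (fun s => (w s).im) d.im t :=
    (Complex.imCLM.hasFDerivAt.comp_hasDerivAt t hw)
  have key : HasDerivAt (fun s => (w s).re * (w s).re + (w s).im * (w s).im)
      (d.re * (w t).re + (w t).re * d.re + (d.im * (w t).im + (w t).im * d.im)) t :=
    (hre.mul hre).add (him.mul him)
  have h2 : (fun s => (w s).re * (w s).re + (w s).im * (w s).im)
      = fun s => Complex.normSq (w s) := funext fun s => by simp [Complex.normSq_apply]
  rw [h2] at key
  convert key using 1
  simp [Complex.mul_re, Complex.conj_re, Complex.conj_im]
  ring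


/-- If `φ τ ≤ φ 0` for `τ ≥ 0` and `φ` is differentiable at `0`, the derivative is `≤ 0`. -/

lemma deriv_nonpos_of_max {φ : ℝ → ℝ} {D : ℝ} (hφ : HasDerivAt φ D 0)
    (hle : ∀ τ : ℝ, 0 ≤ τ → φ τ ≤ φ 0) : D ≤ 0 := by
  have h := hasDerivAt_iff_tendsto_slope.mp hφ
  have h' : Filter.Tendsto (slope φ 0) (nhdsWithin 0 (Set.Ioi 0)) (nhds D) :=
    h.mono_left (nhdsWithin_mono 0 (fun x hx => ne_of_gt hx))
  apply le_of_tendsto h'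
  filter_upwards [self_mem_nhdsWithin] with τ hτ
  have hτ0 : (0:ℝ) < τ := hτ
  rw [slope_def_field]
  apply div_nonpos_of_nonpos_of_nonneg
  · linarith [hle τ hτ0.le]
  · linarith


/-- Derivative of `τ ↦ ginv (f z * exp (-(e^{-iα} τ)))` at `τ = 0`. -/

lemma hasDerivAt_W (hf : DifferentiableOn ℂ f B) (inj : Set.InjOn f B)
    {z : ℂ} (hz : z ∈ B) (hd : deriv f z ≠ 0) :
    HasDerivAt (fun τ : ℝ => ginv f (f z * Complex.exp
        (-(Complex.exp (-(Complex.I * (α : ℂ))) * (τ : ℂ)))))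
      ((deriv f z)⁻¹ * (f z * (-(Complex.exp (-(Complex.I * (α : ℂ))))))) 0 := by
  set k : ℂ := Complex.exp (-(Complex.I * (α:ℂ))) with hk
  have hcr : HasDerivAt (fun τ : ℝ => (τ : ℂ)) 1 0 := by
    exact Complex.ofRealCLM.hasDerivAt (x := (0:ℝ))
  have hlin : HasDerivAt (fun τ : ℝ => -(k * (τ:ℂ))) (-k) 0 := by
    have := (hcr.const_mul k).neg; rw [mul_one] at this; exact this
  have hexp : HasDerivAt (fun τ : ℝ => Complex.exp (-(k * (τ:ℂ))))
      (Complex.exp (-(k * ((0:ℝ):ℂ))) * (-k)) 0 := hlin.cexp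
  have hc : HasDerivAt (fun τ : ℝ => f z * Complex.exp (-(k * (τ:ℂ))))
      (f z * (-k)) 0 := by
    have := hexp.const_mul (f z)
    simpa using this
  have hgd : HasDerivAt (ginv f) (deriv f z)⁻¹ (f z * Complex.exp (-(k * ((0:ℝ):ℂ)))) := by
    simpa using ginv_hasDerivAt hf inj hz hd
  have := (hgd.hasFDerivAt.restrictScalars ℝ).comp_hasDerivAt 0 hc
  refine this.congr_deriv ?_
  simp [mul_comm]

lemma re_Qfun_nonneg_of_spirallike (hf : DifferentiableOn ℂ f B) (h0 : f 0 = 0)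
    (h1 : deriv f 0 = 1) (hnz : ∀ z ∈ B, z ≠ 0 → f z ≠ 0)
    (hα : α ∈ Set.Ioo (-(Real.pi / 2)) (Real.pi / 2))
    (H : Set.InjOn f B ∧ ∀ w ∈ f '' B, ∀ τ : ℝ, 0 ≤ τ →
      w * Complex.exp (-(Complex.exp (-(Complex.I * (α : ℂ))) * (τ : ℂ))) ∈ f '' B) :
    ∀ z ∈ B, 0 ≤ (Qfun f α z).re := by
  intro z hz
  rcases eq_or_ne z 0 with rfl | hz0
  · exact (re_Qfun_zero_pos h1 hα).le
  rcases eq_or_ne (deriv f z) 0 with hd | hd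
  · simp [Qfun, hd]
  -- main case
  have hW0 : ginv f (f z * Complex.exp
      (-(Complex.exp (-(Complex.I * (α:ℂ))) * ((0:ℝ):ℂ)))) = z := by
    have h2 : f z * Complex.exp (-(Complex.exp (-(Complex.I * (α:ℂ))) * ((0:ℝ):ℂ))) = f z := by
      push_cast; rw [mul_zero, neg_zero, Complex.exp_zero, mul_one]
    rw [h2]; exact ginv_f H.1 hz
  have hDW := hasDerivAt_W (α := α) hf H.1 hz hd
  have hφ := hasDerivAt_normSq_comp hDW
  rw [hW0] at hφ
  have hle : ∀ τ : ℝ, 0 ≤ τ →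
      (fun s : ℝ => Complex.normSq (ginv f (f z * Complex.exp
        (-(Complex.exp (-(Complex.I * (α:ℂ))) * (s:ℂ)))))) τ
      ≤ (fun s : ℝ => Complex.normSq (ginv f (f z * Complex.exp
        (-(Complex.exp (-(Complex.I * (α:ℂ))) * (s:ℂ)))))) 0 := by
    intro τ hτ
    simp only
    rw [hW0, ← Complex.sq_norm, ← Complex.sq_norm]
    exact pow_le_pow_left₀ (norm_nonneg _) (schwarz_step hf h0 H hτ hz) 2
  have hD := deriv_nonpos_of_max hφ hle
  -- rewrite the derivative via the key identity
  have hrw : (deriv f z)⁻¹ * (f z * (-(Complex.exp (-(Complex.I * (α:ℂ))))))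
      = -(Complex.exp (-(Complex.I * (α:ℂ))) * f z / deriv f z) := by
    rw [div_eq_mul_inv]; ring
  rw [hrw, re_conj_mul_V (α := α) h0 (hfun_ne_zero hnz hz) hd] at hD
  have hr₁ : 0 < Complex.normSq (hfun f z / deriv f z) :=
    Complex.normSq_pos.mpr (div_ne_zero (hfun_ne_zero hnz hz) hd)
  have hr₂ : 0 < Complex.normSq z := Complex.normSq_pos.mpr hz0
  have h6 : 0 < Complex.normSq (hfun f z / deriv f z) * Complex.normSq z := mul_pos hr₁ hr₂
  have h7 : (Complex.normSq (hfun f z / deriv f z) * Complex.normSq z) * 0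
      ≤ (Complex.normSq (hfun f z / deriv f z) * Complex.normSq z) * (Qfun f α z).re := by
    rw [mul_zero]
    nlinarith [hD]
  exact nonneg_of_mul_nonneg_right (by linarith) h6


lemma forward_dir (hf : DifferentiableOn ℂ f B) (h0 : f 0 = 0)
    (h1 : deriv f 0 = 1) (hnz : ∀ z ∈ B, z ≠ 0 → f z ≠ 0)
    (hα : α ∈ Set.Ioo (-(Real.pi / 2)) (Real.pi / 2))
    (H : Set.InjOn f B ∧ ∀ w ∈ f '' B, ∀ τ : ℝ, 0 ≤ τ →
      w * Complex.exp (-(Complex.exp (-(Complex.I * (α : ℂ))) * (τ : ℂ))) ∈ f '' B) :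
    ∀ z ∈ B, z ≠ 0 →
      0 < (Complex.exp (Complex.I * (α : ℂ)) * z * deriv f z / f z).re := by
  intro z hz hz0
  have := re_Qfun_pos_of_nonneg hf h0 h1 hnz hα
    (re_Qfun_nonneg_of_spirallike hf h0 h1 hnz hα H) z hz
  rwa [Qfun_eq h0 hz0 (hnz z hz hz0)] at this

/-- Hypothesis of the reverse direction. -/

def SRcond (f : ℂ → ℂ) (α : ℝ) : Prop :=
  ∀ z ∈ B, z ≠ 0 → 0 < (Complex.exp (Complex.I * (α : ℂ)) * z * deriv f z / f z).re


lemma re_Qfun_pos_of_SRcond (h0 : f 0 = 0) (h1 : deriv f 0 = 1)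
    (hnz : ∀ z ∈ B, z ≠ 0 → f z ≠ 0)
    (hα : α ∈ Set.Ioo (-(Real.pi / 2)) (Real.pi / 2)) (hc : SRcond f α) :
    ∀ z ∈ B, 0 < (Qfun f α z).re := by
  intro z hz
  rcases eq_or_ne z 0 with rfl | hz0
  · exact re_Qfun_zero_pos h1 hα
  · rw [Qfun_eq h0 hz0 (hnz z hz hz0)]
    exact hc z hz hz0


lemma deriv_ne_zero_of_SRcond (h0 : f 0 = 0) (h1 : deriv f 0 = 1) (hc : SRcond f α) :
    ∀ z ∈ B, deriv f z ≠ 0 := by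
  intro z hz
  rcases eq_or_ne z 0 with rfl | hz0
  · rw [h1]; exact one_ne_zero
  · intro hd
    have := hc z hz hz0
    rw [hd] at this
    simp at this


open Classical in

/-- The (autonomous) spiral vector field, extended by `0` outside the unit ball. -/

def Vf (f : ℂ → ℂ) (α : ℝ) (w : ℂ) : ℂ :=
  if w ∈ B then -(Complex.exp (-(Complex.I * (α:ℂ))) * f w / deriv f w) else 0


lemma Vf_eq_of_mem {w : ℂ} (hw : w ∈ B) :
    Vf f α w = -(Complex.exp (-(Complex.I * (α:ℂ))) * f w / deriv f w) := by
  rw [Vf, if_pos hw]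


lemma Vf_contDiffAt (hf : DifferentiableOn ℂ f B) (hd : ∀ z ∈ B, deriv f z ≠ 0)
    {w : ℂ} (hw : w ∈ B) : ContDiffAt ℝ 1 (Vf f α) w := by
  have h1 : AnalyticAt ℂ (fun w => -(Complex.exp (-(Complex.I * (α:ℂ))) * f w / deriv f w)) w := by
    have hfa : AnalyticAt ℂ f w := hf.analyticAt (Metric.isOpen_ball.mem_nhds hw)
    have hda : AnalyticAt ℂ (deriv f) w := (hf.analyticOnNhd Metric.isOpen_ball).deriv w hw
    exact ((analyticAt_const.mul hfa).div hda (hd w hw)).neg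
  have h2 : ContDiffAt ℂ 1 (fun w => -(Complex.exp (-(Complex.I * (α:ℂ))) * f w / deriv f w)) w :=
    h1.contDiffAt
  have h3 : ContDiffAt ℝ 1 (fun w => -(Complex.exp (-(Complex.I * (α:ℂ))) * f w / deriv f w)) w :=
    h2.restrict_scalars ℝ
  apply h3.congr_of_eventuallyEq
  filter_upwards [Metric.isOpen_ball.mem_nhds hw] with u hu
  exact Vf_eq_of_mem hu


lemma Vf_zero (h0 : f 0 = 0) : Vf f α 0 = 0 := by
  rw [Vf_eq_of_mem (Metric.mem_ball_self one_pos), h0]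
  simp


lemma Vf_exists_lipschitz (hf : DifferentiableOn ℂ f B) (hd : ∀ z ∈ B, deriv f z ≠ 0)
    {r : ℝ} (hr : r < 1) :
    ∃ K : NNReal, LipschitzOnWith K (Vf f α) (Metric.closedBall 0 r) := by
  rcases le_or_gt r 0 with hr0 | hr0
  · rcases lt_or_eq_of_le hr0 with hr0' | rfl
    · refine ⟨1, ?_⟩
      rw [Metric.closedBall_eq_empty.mpr hr0']
      exact (lipschitzOnWith_empty _ _)
    · refine ⟨1, ?_⟩
      rw [Metric.closedBall_zero]
      intro a ha b hb
      simp_all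
  have hsub : Metric.closedBall (0:ℂ) r ⊆ B := Metric.closedBall_subset_ball hr
  have hcd : ContDiffOn ℝ 1 (Vf f α) B := fun x hx =>
    (Vf_contDiffAt hf hd hx).contDiffWithinAt
  have hcont : ContinuousOn (fderiv ℝ (Vf f α)) B :=
    hcd.continuousOn_fderiv_of_isOpen Metric.isOpen_ball le_rfl
  obtain ⟨C, hC⟩ := (isCompact_closedBall (0:ℂ) r).exists_bound_of_continuousOn
    (hcont.mono hsub)
  refine ⟨NNReal.mk (max C 0) (le_max_right _ _), ?_⟩
  apply Convex.lipschitzOnWith_of_nnnorm_fderiv_le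
    (fun x hx => ((Vf_contDiffAt hf hd (hsub hx)).differentiableAt one_ne_zero)) ?_
    (convex_closedBall 0 r)
  intro x hx
  have := hC x hx
  rw [← NNReal.coe_le_coe]
  simp only [coe_nnnorm, NNReal.coe_mk]
  exact le_trans this (le_max_left _ _)


lemma Vf_exists_bound (hf : DifferentiableOn ℂ f B) (hd : ∀ z ∈ B, deriv f z ≠ 0)
    {r : ℝ} (hr : r < 1) :
    ∃ C : ℝ, 0 ≤ C ∧ ∀ x ∈ Metric.closedBall (0:ℂ) r, ‖Vf f α x‖ ≤ C := by
  rcases le_or_gt r 0 with hr0 | hr0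
  · rcases lt_or_eq_of_le hr0 with hr0' | rfl
    · exact ⟨0, le_rfl, by rw [Metric.closedBall_eq_empty.mpr hr0']; simp⟩
    · refine ⟨‖Vf f α 0‖, norm_nonneg _, ?_⟩
      rw [Metric.closedBall_zero]
      intro x hx; simp_all
  have hsub : Metric.closedBall (0:ℂ) r ⊆ B := Metric.closedBall_subset_ball hr
  have hcont : ContinuousOn (Vf f α) (Metric.closedBall 0 r) := by
    intro x hx
    exact ((Vf_contDiffAt hf hd (hsub hx)).continuousAt).continuousWithinAt
  obtain ⟨C, hC⟩ := (isCompact_closedBall (0:ℂ) r).exists_bound_of_continuousOn hcont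
  exact ⟨max C 0, le_max_right _ _, fun x hx => le_trans (hC x hx) (le_max_left _ _)⟩


def psif (f : ℂ → ℂ) (α : ℝ) (w : ℂ) : ℝ :=
  Complex.normSq (hfun f w / deriv f w) * (Qfun f α w).re

lemma re_conj_mul_Vf (h0 : f 0 = 0) (hnz : ∀ z ∈ B, z ≠ 0 → f z ≠ 0)
    (hd : ∀ z ∈ B, deriv f z ≠ 0) {w : ℂ} (hw : w ∈ B) :
    ((starRingEnd ℂ) w * Vf f α w).re = -(psif f α w * Complex.normSq w) := by
  rw [Vf_eq_of_mem hw, re_conj_mul_V (α := α) h0 (hfun_ne_zero hnz hw) (hd w hw), psif]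
  ring


lemma psif_pos (h0 : f 0 = 0) (h1 : deriv f 0 = 1) (hnz : ∀ z ∈ B, z ≠ 0 → f z ≠ 0)
    (hd : ∀ z ∈ B, deriv f z ≠ 0) (hQ : ∀ z ∈ B, 0 < (Qfun f α z).re)
    {w : ℂ} (hw : w ∈ B) : 0 < psif f α w :=
  mul_pos (Complex.normSq_pos.mpr (div_ne_zero (hfun_ne_zero hnz hw) (hd w hw))) (hQ w hw)


lemma psif_continuousOn (hf : DifferentiableOn ℂ f B) (h0 : f 0 = 0)
    (h1 : deriv f 0 = 1) (hnz : ∀ z ∈ B, z ≠ 0 → f z ≠ 0)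
    (hd : ∀ z ∈ B, deriv f z ≠ 0) : ContinuousOn (psif f α) B := by
  have c1 : ContinuousOn (fun w => hfun f w / deriv f w) B :=
    ((hfun_differentiableOn hf h0 h1).continuousOn).div
      ((deriv_differentiableOn hf).continuousOn) (fun z hz => hd z hz)
  have c2 : ContinuousOn (fun w => Complex.normSq (hfun f w / deriv f w)) B :=
    Complex.continuous_normSq.comp_continuousOn c1
  have c3 : ContinuousOn (fun w => (Qfun f α w).re) B :=
    Complex.continuous_re.comp_continuousOn
      ((Qfun_differentiableOn hf h0 h1 hnz).continuousOn)
  exact c2.mul c3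


/-- The fundamental monotonicity: `e^{cs}‖w(s)‖²` is non-increasing along solutions,

as long as `c` is below the dissipation rate. -/

lemma normSq_exp_antitone (h0 : f 0 = 0) (hnz : ∀ z ∈ B, z ≠ 0 → f z ≠ 0)
    (hd : ∀ z ∈ B, deriv f z ≠ 0) {c : ℝ} (hc : 0 ≤ c) {a b : ℝ} {w : ℝ → ℂ}
    (hw : ∀ s ∈ Icc a b, HasDerivAt w (Vf f α (w s)) s)
    (hmem : ∀ s ∈ Icc a b, w s ∈ B)
    (hψ : ∀ s ∈ Icc a b, c ≤ psif f α (w s)) :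
    AntitoneOn (fun s => Real.exp (c*s) * Complex.normSq (w s)) (Icc a b) := by
  have hder : ∀ s ∈ Icc a b, HasDerivAt (fun s => Real.exp (c*s) * Complex.normSq (w s))
      ((c * Real.exp (c*s)) * Complex.normSq (w s)
        + Real.exp (c*s) * (2 * (((starRingEnd ℂ) (w s)) * Vf f α (w s)).re)) s := by
    intro s hs
    have h1 : HasDerivAt (fun s : ℝ => Real.exp (c*s)) (c * Real.exp (c*s)) s := by
      have := ((hasDerivAt_id s).const_mul c).exp
      refine this.congr_deriv ?_; simp [mul_comm]
    exact h1.mul (hasDerivAt_normSq_comp (hw s hs))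
  apply antitoneOn_of_deriv_nonpos (convex_Icc a b)
  · exact fun s hs => (hder s hs).continuousAt.continuousWithinAt
  · intro s hs
    rw [interior_Icc] at hs
    exact (hder s (Ioo_subset_Icc_self hs)).differentiableAt.differentiableWithinAt
  · intro s hs
    rw [interior_Icc] at hs
    rw [(hder s (Ioo_subset_Icc_self hs)).deriv]
    have hsI := Ioo_subset_Icc_self hs
    rw [re_conj_mul_Vf (α := α) h0 hnz hd (hmem s hsI)]
    have h2 : c ≤ psif f α (w s) := hψ s hsI
    have h3 : 0 ≤ Complex.normSq (w s) := Complex.normSq_nonneg _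
    have h4 : 0 < Real.exp (c*s) := Real.exp_pos _
    have h5 : c * Complex.normSq (w s) ≤ psif f α (w s) * Complex.normSq (w s) :=
      mul_le_mul_of_nonneg_right h2 h3
    have h6 : 0 ≤ psif f α (w s) * Complex.normSq (w s) :=
      mul_nonneg (le_trans hc h2) h3
    nlinarith [mul_le_mul_of_nonneg_left h5 h4.le, mul_nonneg (mul_nonneg h4.le (le_trans hc h2)) h3]

/-- Special case `c = 0`: `‖w(s)‖²` is non-increasing. -/

lemma normSq_antitone (h0 : f 0 = 0) (h1 : deriv f 0 = 1)
    (hnz : ∀ z ∈ B, z ≠ 0 → f z ≠ 0)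
    (hd : ∀ z ∈ B, deriv f z ≠ 0) (hQ : ∀ z ∈ B, 0 < (Qfun f α z).re)
    {a b : ℝ} {w : ℝ → ℂ}
    (hw : ∀ s ∈ Icc a b, HasDerivAt w (Vf f α (w s)) s)
    (hmem : ∀ s ∈ Icc a b, w s ∈ B) :
    AntitoneOn (fun s => Complex.normSq (w s)) (Icc a b) := by
  have := normSq_exp_antitone (α := α) (c := 0) h0 hnz hd le_rfl hw hmem
    (fun s hs => (psif_pos h0 h1 hnz hd hQ (hmem s hs)).le)
  simpa using this


/-- Along solutions, `e^{e^{-iα} s} f (w s)` is constant. -/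

lemma flow_exp (hf : DifferentiableOn ℂ f B) (hd : ∀ z ∈ B, deriv f z ≠ 0)
    {a b : ℝ} {w : ℝ → ℂ}
    (hw : ∀ s ∈ Icc a b, HasDerivAt w (Vf f α (w s)) s)
    (hmem : ∀ s ∈ Icc a b, w s ∈ B) :
    ∀ s ∈ Icc a b,
      Complex.exp (Complex.exp (-(Complex.I*(α:ℂ))) * (s:ℂ)) * f (w s)
        = Complex.exp (Complex.exp (-(Complex.I*(α:ℂ))) * (a:ℂ)) * f (w a) := by
  set k : ℂ := Complex.exp (-(Complex.I*(α:ℂ))) with hk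
  have hder : ∀ s ∈ Icc a b,
      HasDerivAt (fun s : ℝ => Complex.exp (k * (s:ℂ)) * f (w s)) 0 s := by
    intro s hs
    have hcr : HasDerivAt (fun τ : ℝ => (τ : ℂ)) 1 s := by
      exact Complex.ofRealCLM.hasDerivAt (x := s)
    have hexp : HasDerivAt (fun τ : ℝ => Complex.exp (k * (τ:ℂ)))
        (Complex.exp (k * (s:ℂ)) * k) s := by
      have := ((hcr.const_mul k).cexp)
      simpa using this
    have hfw : HasDerivAt (fun τ : ℝ => f (w τ)) (Vf f α (w s) * deriv f (w s)) s := by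
      have h5 := ((hasDerivAt_of_mem' hf (hmem s hs)).hasFDerivAt.restrictScalars
        ℝ).comp_hasDerivAt s (hw s hs)
      refine h5.congr_deriv ?_; simp [mul_comm]
    have := hexp.mul hfw
    refine this.congr_deriv ?_
    rw [Vf_eq_of_mem (hmem s hs)]
    field_simp [hd _ (hmem s hs)]
    ring
  have hcont : ContinuousOn (fun s : ℝ => Complex.exp (k * (s:ℂ)) * f (w s)) (Icc a b) :=
    fun s hs => (hder s hs).continuousAt.continuousWithinAt
  have := constant_of_has_deriv_right_zero hcont
    (fun s hs => (hder s (Ico_subset_Icc_self hs)).hasDerivWithinAt)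
  exact this

/-- Existence of a solution of the spiral ODE on `[0, T]`, staying in `closedBall 0 r`. -/

def SolOn (f : ℂ → ℂ) (α : ℝ) (z : ℂ) (r T : ℝ) : Prop :=
  ∃ w : ℝ → ℂ, w 0 = z ∧ ∀ s ∈ Icc 0 T,
    w s ∈ Metric.closedBall (0:ℂ) r ∧ HasDerivAt w (Vf f α (w s)) s


theorem solOn_all (hf : DifferentiableOn ℂ f B) (h0 : f 0 = 0) (h1 : deriv f 0 = 1)
    (hnz : ∀ z ∈ B, z ≠ 0 → f z ≠ 0) (hd : ∀ z ∈ B, deriv f z ≠ 0)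
    (hQ : ∀ z ∈ B, 0 < (Qfun f α z).re) {z : ℂ} (hz : z ∈ B) :
    ∀ T : ℝ, 0 ≤ T → SolOn f α z ‖z‖ T := by
  set r : ℝ := ‖z‖ with hrdef
  have hr1 : r < 1 := mem_ball_zero_iff.mp hz
  have hr0 : 0 ≤ r := norm_nonneg z
  set r'' : ℝ := (1 + r) / 2 with hr''def
  have hr''1 : r'' < 1 := by rw [hr''def]; linarith
  have hrr'' : r < r'' := by rw [hr''def]; linarith
  set R : ℝ := (1 - r) / 2 with hRdef
  have hR : 0 < R := by rw [hRdef]; linarith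
  have hrR : r + R = r'' := by rw [hRdef, hr''def]; ring
  obtain ⟨K, hK⟩ := Vf_exists_lipschitz (α := α) hf hd hr''1
  obtain ⟨C₀, hC₀0, hC₀⟩ := Vf_exists_bound (α := α) hf hd hr''1
  set ε₀ : ℝ := R / (C₀ + 1) with hε₀def
  have hε₀ : 0 < ε₀ := by rw [hε₀def]; positivity
  set ε₁ : ℝ := ε₀ / 2 with hε₁def
  have hε₁ : 0 < ε₁ := by rw [hε₁def]; positivity
  have hε₁₀ : ε₁ < ε₀ := by rw [hε₁def]; linarith
  have hsubB : Metric.closedBall (0:ℂ) r'' ⊆ B := Metric.closedBall_subset_ball hr''1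
  -- uniform Picard–Lindelöf instance around any point of `closedBall 0 r`
  have hPL : ∀ τ : ℝ, ∀ x₀ : ℂ, ‖x₀‖ ≤ r →
      ∃ g : ℝ → ℂ, g τ = x₀ ∧ ∀ t ∈ Icc (τ - ε₀) (τ + ε₀),
        HasDerivWithinAt g (Vf f α (g t)) (Icc (τ - ε₀) (τ + ε₀)) t := by
    intro τ x₀ hx₀
    have hsub' : Metric.closedBall x₀ R ⊆ Metric.closedBall (0:ℂ) r'' := by
      intro y hy
      rw [Metric.mem_closedBall] at hy ⊢
      calc dist y 0 ≤ dist y x₀ + dist x₀ 0 := dist_triangle _ _ _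
        _ ≤ R + r := by
            refine add_le_add hy ?_
            rwa [Complex.dist_eq, sub_zero]
        _ = r'' := by linarith [hrR]
    have hpl : IsPicardLindelof (fun _ x => Vf f α x) (tmin := τ - ε₀) (tmax := τ + ε₀)
        ⟨τ, ⟨by linarith, by linarith⟩⟩ x₀ (NNReal.mk R hR.le) 0 (NNReal.mk C₀ hC₀0) K :=
      { lipschitzOnWith := fun t _ => hK.mono hsub'
        continuousOn := fun x _ => continuousOn_const
        norm_le := fun t _ x hx => hC₀ x (hsub' hx)
        mul_max_le := by
          simp only [NNReal.coe_mk, NNReal.coe_zero, sub_zero]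
          rw [add_sub_cancel_left, sub_sub_cancel, max_self, hε₀def]
          rw [mul_div_assoc']
          rw [div_le_iff₀ (by linarith : (0:ℝ) < C₀ + 1)]
          nlinarith }
    obtain ⟨g, hg0, hg⟩ := hpl.exists_eq_forall_mem_Icc_hasDerivWithinAt₀
    exact ⟨g, hg0, hg⟩
  -- the step: extension by ε₁
  have step : ∀ τ : ℝ, 0 ≤ τ → SolOn f α z r τ → SolOn f α z r (τ + ε₁) := by
    intro τ hτ ⟨w, hw0, hw⟩
    have hxmem := (hw τ ⟨hτ, le_rfl⟩).1
    have hx₀ : ‖w τ‖ ≤ r := by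
      rwa [Metric.mem_closedBall, Complex.dist_eq, sub_zero] at hxmem
    obtain ⟨g, hgτ, hg⟩ := hPL τ (w τ) hx₀
    have hIoosub : Icc τ (τ + ε₁) ⊆ Ioo (τ - ε₀) (τ + ε₀) := fun s hs =>
      ⟨by linarith [hs.1], by linarith [hs.2]⟩
    have hgD : ∀ s ∈ Ioo (τ - ε₀) (τ + ε₀), HasDerivAt g (Vf f α (g s)) s := fun s hs =>
      (hg s (Ioo_subset_Icc_self hs)).hasDerivAt (Icc_mem_nhds hs.1 hs.2)
    -- continuity of `‖g‖` through a clamped reparametrization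
    have hgc : ContinuousOn g (Icc (τ - ε₀) (τ + ε₀)) := fun s hs =>
      (hg s hs).continuousWithinAt
    -- escape argument: g stays in `closedBall 0 r` on `[τ, τ+ε₁]`
    have hesc : ∀ s ∈ Icc τ (τ + ε₁), g s ∈ Metric.closedBall (0:ℂ) r := by
      -- the clamped norm function
      set G : ℝ → ℝ := fun s => ‖g (max τ (min s (τ + ε₁)))‖ with hGdef
      have hclamp : ∀ s ∈ Icc τ (τ + ε₁), G s = ‖g s‖ := by
        intro s hs
        rw [hGdef]
        simp only
        rw [min_eq_left hs.2, max_eq_right hs.1]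
      have hGcont : Continuous G := by
        apply Continuous.norm
        apply hgc.comp_continuous
          (continuous_const.max (continuous_id.min continuous_const))
        intro x
        constructor
        · calc τ - ε₀ ≤ τ := by linarith
            _ ≤ _ := le_max_left _ _
        · apply max_le (by linarith)
          calc min x (τ + ε₁) ≤ τ + ε₁ := min_le_right _ _
            _ ≤ τ + ε₀ := by linarith
      -- first: g stays in closedBall 0 r'' on [τ, τ+ε₁]
      have hin'' : ∀ s ∈ Icc τ (τ + ε₁), ‖g s‖ ≤ r'' := by
        by_contra hcon
        push_neg at hcon
        obtain ⟨s₂, hs₂, hs₂r⟩ := hcon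
        set A : Set ℝ := Icc τ (τ + ε₁) ∩ {s | r'' ≤ G s} with hAdef
        have hAne : A.Nonempty := ⟨s₂, hs₂, by rw [mem_setOf_eq, hclamp s₂ hs₂]; linarith⟩
        have hAclosed : IsClosed A := isClosed_Icc.inter (isClosed_le continuous_const hGcont)
        have hAbdd : BddBelow A := ⟨τ, fun x hx => hx.1.1⟩
        set s₁ : ℝ := sInf A with hs₁def
        have hs₁A : s₁ ∈ A := hAclosed.csInf_mem hAne hAbdd
        have hτA : τ ∉ A := by
          intro hA
          have h2 := hA.2
          rw [mem_setOf_eq, hclamp τ ⟨le_rfl, by linarith⟩] at h2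
          have h3 : ‖g τ‖ ≤ r := by rw [hgτ]; simpa using hx₀
          linarith
        have hτs₁ : τ < s₁ := by
          rcases eq_or_lt_of_le hs₁A.1.1 with heq | h
          · exact absurd (heq ▸ hs₁A) hτA
          · exact h
        have hs₁r'' : r'' ≤ ‖g s₁‖ := by
          have := hs₁A.2
          rwa [mem_setOf_eq, hclamp s₁ hs₁A.1] at this
        have hlt : ∀ s ∈ Ico τ s₁, ‖g s‖ < r'' := by
          intro s hs
          by_contra hge
          push_neg at hge
          have hsIcc : s ∈ Icc τ (τ + ε₁) := ⟨hs.1, le_trans hs.2.le hs₁A.1.2⟩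
          have hsA : s ∈ A := ⟨hsIcc, by rw [mem_setOf_eq, hclamp s hsIcc]; exact hge⟩
          have := csInf_le hAbdd hsA
          rw [← hs₁def] at this
          linarith [hs.2]
        have hs₁le : ‖g s₁‖ ≤ r'' := by
          have hcl : s₁ ∈ closure (Ico τ s₁) := by
            rw [closure_Ico (ne_of_lt hτs₁)]
            exact ⟨hτs₁.le, le_rfl⟩
          have hnb : (nhdsWithin s₁ (Ico τ s₁)).NeBot :=
            mem_closure_iff_nhdsWithin_neBot.mp hcl
          have htend : Filter.Tendsto G (nhdsWithin s₁ (Ico τ s₁)) (nhds (G s₁)) :=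
            (hGcont.continuousAt).continuousWithinAt
          have : G s₁ ≤ r'' := by
            apply le_of_tendsto htend
            filter_upwards [self_mem_nhdsWithin] with u hu
            have huIcc : u ∈ Icc τ (τ + ε₁) := ⟨hu.1, le_trans hu.2.le hs₁A.1.2⟩
            rw [hclamp u huIcc]
            exact (hlt u hu).le
          rwa [hclamp s₁ hs₁A.1] at this
        have hmem1 : ∀ s ∈ Icc τ s₁, g s ∈ B := by
          intro s hs
          apply hsubB
          rw [Metric.mem_closedBall, Complex.dist_eq, sub_zero]
          rcases lt_or_eq_of_le hs.2 with h | h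
          · exact (hlt s ⟨hs.1, h⟩).le
          · rw [h]; exact hs₁le
        have hanti1 := normSq_antitone (α := α) h0 h1 hnz hd hQ
          (fun s hs => hgD s ⟨by linarith [hs.1], by linarith [hs.2, hs₁A.1.2]⟩) hmem1
        have hle := hanti1 ⟨le_rfl, hτs₁.le⟩ ⟨hτs₁.le, le_rfl⟩ hτs₁.le
        simp only at hle
        rw [← Complex.sq_norm, ← Complex.sq_norm] at hle
        have h2 : ‖g τ‖ ≤ r := by rw [hgτ]; exact hx₀
        have h3 : r'' ≤ ‖g s₁‖ := hs₁r''
        nlinarith [norm_nonneg (g s₁), norm_nonneg (g τ)]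
      -- then: antitone gives closedBall 0 r
      have hmem'' : ∀ s ∈ Icc τ (τ + ε₁), g s ∈ B := fun s hs =>
        hsubB (by rw [Metric.mem_closedBall, Complex.dist_eq, sub_zero]; exact hin'' s hs)
      have hanti := normSq_antitone (α := α) h0 h1 hnz hd hQ
        (fun s hs => hgD s (hIoosub hs)) hmem''
      intro s hs
      have := hanti ⟨le_rfl, by linarith⟩ hs hs.1
      rw [Metric.mem_closedBall, Complex.dist_eq, sub_zero]
      have hgg : Complex.normSq (g s) ≤ Complex.normSq (g τ) := this
      rw [← Complex.sq_norm, ← Complex.sq_norm] at hgg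
      have h2 : ‖g τ‖ ≤ r := by rw [hgτ]; exact hx₀
      nlinarith [norm_nonneg (g s), norm_nonneg (g τ)]
    -- gluing
    rcases eq_or_lt_of_le hτ with hτ0 | hτpos
    · -- τ = 0 : use g directly
      subst hτ0
      exact ⟨g, by rw [hgτ, hw0], fun s hs => ⟨hesc s hs, hgD s (hIoosub hs)⟩⟩
    · -- τ > 0 : glue w and g
      have hgτB : g τ ∈ Metric.ball (0:ℂ) r'' := by
        rw [hgτ, mem_ball_zero_iff]
        linarith
      have hgcτ : ContinuousAt g τ := (hgD τ ⟨by linarith, by linarith⟩).continuousAt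
      have hball'' : ∀ᶠ s in nhds τ, g s ∈ Metric.ball (0:ℂ) r'' :=
        hgcτ.eventually_mem (Metric.isOpen_ball.mem_nhds hgτB)
      obtain ⟨η', hη', hballs⟩ := Metric.eventually_nhds_iff_ball.mp hball''
      set η : ℝ := min (η'/2) (min τ ε₁) with hηdef
      have hη : 0 < η := lt_min (by linarith) (lt_min hτpos hε₁)
      have hητ : η ≤ τ := le_trans (min_le_right _ _) (min_le_left _ _)
      have hηε : η ≤ ε₁ := le_trans (min_le_right _ _) (min_le_right _ _)
      have hηη' : η < η' := lt_of_le_of_lt (min_le_left _ _) (by linarith)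
      set a : ℝ := τ - η with hadef
      have ha0 : 0 ≤ a := by rw [hadef]; linarith
      have haτ : a < τ := by rw [hadef]; linarith
      have huni : EqOn w g (Icc a τ) := by
        apply ODE_solution_unique_of_mem_Icc_left
          (v := fun _ x => Vf f α x) (s := fun _ => Metric.closedBall (0:ℂ) r'')
          (fun _ _ => hK) ?_ ?_ ?_ ?_ ?_ ?_ hgτ.symm
        · exact fun t ht =>
            ((hw t ⟨by linarith [ht.1], ht.2⟩).2.continuousAt).continuousWithinAt
        · exact fun t ht =>
            (hw t ⟨by linarith [ht.1], ht.2⟩).2.hasDerivWithinAt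
        · exact fun t ht => Metric.closedBall_subset_closedBall hrr''.le
            (hw t ⟨by linarith [ht.1], ht.2⟩).1
        · apply hgc.mono
          intro t ht
          exact ⟨by linarith [ht.1], by linarith [ht.2]⟩
        · exact fun t ht =>
            (hgD t ⟨by linarith [ht.1], by linarith [ht.2]⟩).hasDerivWithinAt
        · intro t ht
          apply Metric.ball_subset_closedBall
          apply hballs
          rw [Metric.mem_ball, Real.dist_eq, abs_sub_lt_iff]
          constructor
          · linarith [ht.2]
          · linarith [ht.1]
      classical
      refine ⟨fun u => if u ≤ τ then w u else g u, ?_, ?_⟩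
      · show (if (0:ℝ) ≤ τ then w 0 else g 0) = z
        rw [if_pos hτpos.le, hw0]
      · intro s hs
        rcases lt_trichotomy s τ with hls | heq | hgs'
        · have hsIcc : s ∈ Icc 0 τ := ⟨hs.1, hls.le⟩
          have hWw : (fun u => if u ≤ τ then w u else g u) =ᶠ[nhds s] w := by
            filter_upwards [Iio_mem_nhds hls] with u hu
            rw [if_pos (le_of_lt hu)]
          refine ⟨?_, ?_⟩
          · show (if s ≤ τ then w s else g s) ∈ Metric.closedBall (0:ℂ) r
            rw [if_pos hls.le]; exact (hw s hsIcc).1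
          · show HasDerivAt (fun u => if u ≤ τ then w u else g u)
              (Vf f α (if s ≤ τ then w s else g s)) s
            rw [if_pos hls.le]
            exact (hw s hsIcc).2.congr_of_eventuallyEq hWw
        · subst heq
          have hWg : (fun u => if u ≤ s then w u else g u) =ᶠ[nhds s] g := by
            filter_upwards [Ioo_mem_nhds (show a < s from haτ) (show s < s + ε₀ by linarith)]
              with u hu
            by_cases hu' : u ≤ s
            · rw [if_pos hu']; exact huni ⟨hu.1.le, hu'⟩
            · rw [if_neg hu']
          refine ⟨?_, ?_⟩
          · show (if s ≤ s then w s else g s) ∈ Metric.closedBall (0:ℂ) r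
            rw [if_pos le_rfl]; exact (hw s ⟨hτ, le_rfl⟩).1
          · have h8 : HasDerivAt g (Vf f α (g s)) s := hgD s ⟨by linarith, by linarith⟩
            have h9 := h8.congr_of_eventuallyEq hWg
            show HasDerivAt (fun u => if u ≤ s then w u else g u)
              (Vf f α (if s ≤ s then w s else g s)) s
            rw [if_pos le_rfl, ← hgτ]
            exact h9
        · have hsg : s ∈ Icc τ (τ + ε₁) := ⟨hgs'.le, hs.2⟩
          have hWg : (fun u => if u ≤ τ then w u else g u) =ᶠ[nhds s] g := by
            filter_upwards [Ioi_mem_nhds hgs'] with u hu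
            rw [if_neg (not_le.mpr hu)]
          refine ⟨?_, ?_⟩
          · show (if s ≤ τ then w s else g s) ∈ Metric.closedBall (0:ℂ) r
            rw [if_neg (not_le.mpr hgs')]; exact hesc s hsg
          · have h8 : HasDerivAt g (Vf f α (g s)) s := hgD s (hIoosub hsg)
            have h9 := h8.congr_of_eventuallyEq hWg
            show HasDerivAt (fun u => if u ≤ τ then w u else g u)
              (Vf f α (if s ≤ τ then w s else g s)) s
            rw [if_neg (not_le.mpr hgs')]
            exact h9
  -- induction
  have base : SolOn f α z r 0 := by
    obtain ⟨g, hg0, hg⟩ := hPL 0 z le_rfl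
    refine ⟨g, hg0, ?_⟩
    intro s hs
    have hs0 : s = 0 := le_antisymm hs.2 hs.1
    subst hs0
    refine ⟨?_, ?_⟩
    · rw [hg0, Metric.mem_closedBall, Complex.dist_eq, sub_zero]
    · exact (hg 0 ⟨by linarith, by linarith⟩).hasDerivAt
        (Icc_mem_nhds (by linarith) (by linarith))
  have ind : ∀ n : ℕ, SolOn f α z r ((n : ℝ) * ε₁) := by
    intro n
    induction n with
    | zero => simpa using base
    | succ n ih =>
        have hst := step ((n : ℝ) * ε₁) (by positivity) ih
        have hcast : (n : ℝ) * ε₁ + ε₁ = (((n+1 : ℕ)) : ℝ) * ε₁ := by push_cast; ring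
        rwa [hcast] at hst
  intro T hT
  obtain ⟨n, hn⟩ := exists_nat_ge (T / ε₁)
  have hTn : T ≤ (n : ℝ) * ε₁ := by
    rw [div_le_iff₀ hε₁] at hn
    linarith
  obtain ⟨w, hw0, hw⟩ := ind n
  exact ⟨w, hw0, fun s hs => hw s ⟨hs.1, le_trans hs.2 hTn⟩⟩

/-- Invariance of the image under the spiral. -/

lemma backward_spiral (hf : DifferentiableOn ℂ f B) (h0 : f 0 = 0) (h1 : deriv f 0 = 1)
    (hnz : ∀ z ∈ B, z ≠ 0 → f z ≠ 0) (hd : ∀ z ∈ B, deriv f z ≠ 0)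
    (hQ : ∀ z ∈ B, 0 < (Qfun f α z).re) :
    ∀ w ∈ f '' B, ∀ τ : ℝ, 0 ≤ τ →
      w * Complex.exp (-(Complex.exp (-(Complex.I * (α : ℂ))) * (τ : ℂ))) ∈ f '' B := by
  rintro w ⟨z, hz, rfl⟩ τ hτ
  obtain ⟨w', hw0, hw⟩ := solOn_all hf h0 h1 hnz hd hQ hz τ hτ
  have hsubB : Metric.closedBall (0:ℂ) ‖z‖ ⊆ B :=
    Metric.closedBall_subset_ball (mem_ball_zero_iff.mp hz)
  have hmem : ∀ s ∈ Icc 0 τ, w' s ∈ B := fun s hs => hsubB (hw s hs).1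
  have hflow := flow_exp hf hd (fun s hs => (hw s hs).2) hmem τ ⟨hτ, le_rfl⟩
  rw [hw0] at hflow
  set k : ℂ := Complex.exp (-(Complex.I * (α:ℂ))) with hk
  have h2 : f (w' τ) = f z * Complex.exp (-(k * (τ:ℂ))) := by
    have h3 : Complex.exp (k * ((0:ℝ):ℂ)) = 1 := by push_cast; rw [mul_zero, Complex.exp_zero]
    rw [h3, one_mul] at hflow
    have h4 : Complex.exp (k * (τ:ℂ)) ≠ 0 := Complex.exp_ne_zero _
    field_simp [Complex.exp_neg] at hflow ⊢
    rw [← hflow, Complex.exp_neg, mul_comm (Complex.exp _) (f _), mul_assoc,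
      mul_inv_cancel₀ h4, mul_one]
  exact ⟨w' τ, hmem τ ⟨hτ, le_rfl⟩, h2⟩


/-- Local injectivity at the origin. -/

lemma exists_inj_ball (hf : DifferentiableOn ℂ f B) (h1 : deriv f 0 = 1) :
    ∃ δ : ℝ, 0 < δ ∧ Set.InjOn f (Metric.ball 0 δ) := by
  obtain ⟨p, hp⟩ := analyticAt_of_mem hf (Metric.mem_ball_self one_pos)
  have hsd := hp.hasStrictDerivAt
  have hda := hp.hasDerivAt
  have hval := hda.deriv.symm.trans h1
  rw [hval] at hsd
  have he := hsd.hasStrictFDerivAt_equiv one_ne_zero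
  set Φ := he.toOpenPartialHomeomorph f with hΦ
  have hopen : IsOpen Φ.source := Φ.open_source
  have hmem : (0:ℂ) ∈ Φ.source := he.mem_toOpenPartialHomeomorph_source
  obtain ⟨δ, hδ, hsub⟩ := Metric.isOpen_iff.mp hopen 0 hmem
  refine ⟨δ, hδ, ?_⟩
  have hinj : Set.InjOn Φ Φ.source := Φ.injOn
  have hcoe : (Φ : ℂ → ℂ) = f := he.toOpenPartialHomeomorph_coe
  rw [hcoe] at hinj
  exact hinj.mono hsub


/-- Injectivity. -/

lemma backward_inj (hf : DifferentiableOn ℂ f B) (h0 : f 0 = 0) (h1 : deriv f 0 = 1)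
    (hnz : ∀ z ∈ B, z ≠ 0 → f z ≠ 0) (hd : ∀ z ∈ B, deriv f z ≠ 0)
    (hQ : ∀ z ∈ B, 0 < (Qfun f α z).re) : Set.InjOn f B := by
  intro z₁ hz₁ z₂ hz₂ heq
  set r₀ : ℝ := max ‖z₁‖ ‖z₂‖ with hr₀def
  have hr₀0 : 0 ≤ r₀ := le_trans (norm_nonneg z₁) (le_max_left _ _)
  have hr₀1 : r₀ < 1 := max_lt (mem_ball_zero_iff.mp hz₁) (mem_ball_zero_iff.mp hz₂)
  set r'' : ℝ := (1 + r₀) / 2 with hr''def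
  have hr''1 : r'' < 1 := by rw [hr''def]; linarith
  have hr₀r'' : r₀ < r'' := by rw [hr''def]; linarith
  have hr''0 : 0 ≤ r'' := by rw [hr''def]; linarith
  have hsubB : Metric.closedBall (0:ℂ) r'' ⊆ B := Metric.closedBall_subset_ball hr''1
  have hsub0 : Metric.closedBall (0:ℂ) r₀ ⊆ Metric.closedBall (0:ℂ) r'' :=
    Metric.closedBall_subset_closedBall hr₀r''.le
  -- minimum of the dissipation rate
  obtain ⟨xm, hxm, hxmin⟩ := (isCompact_closedBall (0:ℂ) r'').exists_isMinOn
    ⟨0, Metric.mem_closedBall_self hr''0⟩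
    ((psif_continuousOn hf h0 h1 hnz hd).mono hsubB)
  set c : ℝ := psif f α xm with hcdef
  have hc0 : 0 < c := psif_pos h0 h1 hnz hd hQ (hsubB hxm)
  have hcle : ∀ u ∈ Metric.closedBall (0:ℂ) r'', c ≤ psif f α u := fun u hu => hxmin hu
  -- local injectivity radius
  obtain ⟨δ, hδ, hinj⟩ := exists_inj_ball hf h1
  -- choose T
  have htend : Filter.Tendsto (fun T : ℝ => Real.exp (c*T)) atTop atTop :=
    Real.tendsto_exp_atTop.comp (Filter.Tendsto.const_mul_atTop hc0 Filter.tendsto_id)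
  obtain ⟨T, hT⟩ := ((htend.eventually_ge_atTop (1/(δ^2))).and
    (Filter.eventually_ge_atTop 0)).exists
  obtain ⟨hTexp, hT0⟩ := hT
  -- flows
  obtain ⟨w₁, hw₁0, hw₁⟩ := solOn_all hf h0 h1 hnz hd hQ hz₁ T hT0
  obtain ⟨w₂, hw₂0, hw₂⟩ := solOn_all hf h0 h1 hnz hd hQ hz₂ T hT0
  have hmemr'' : ∀ i ∈ ({1,2} : Set ℕ), True := fun _ _ => trivial
  have hm₁ : ∀ s ∈ Icc 0 T, w₁ s ∈ Metric.closedBall (0:ℂ) r'' := fun s hs =>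
    hsub0 (Metric.closedBall_subset_closedBall (le_max_left _ _) (hw₁ s hs).1)
  have hm₂ : ∀ s ∈ Icc 0 T, w₂ s ∈ Metric.closedBall (0:ℂ) r'' := fun s hs =>
    hsub0 (Metric.closedBall_subset_closedBall (le_max_right _ _) (hw₂ s hs).1)
  have hm₁B : ∀ s ∈ Icc 0 T, w₁ s ∈ B := fun s hs => hsubB (hm₁ s hs)
  have hm₂B : ∀ s ∈ Icc 0 T, w₂ s ∈ B := fun s hs => hsubB (hm₂ s hs)
  -- decay
  have hdecay : ∀ (w : ℝ → ℂ), w 0 ∈ B → (∀ s ∈ Icc 0 T, HasDerivAt w (Vf f α (w s)) s) →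
      (∀ s ∈ Icc 0 T, w s ∈ Metric.closedBall (0:ℂ) r'') →
      ‖w T‖ < δ := by
    intro w hw0B hwD hwm
    have hanti := normSq_exp_antitone (α := α) h0 hnz hd hc0.le hwD
      (fun s hs => hsubB (hwm s hs)) (fun s hs => hcle _ (hwm s hs))
    have h5 := hanti ⟨le_rfl, hT0⟩ ⟨hT0, le_rfl⟩ hT0
    simp only [mul_zero, Real.exp_zero, one_mul] at h5
    have h6 : Complex.normSq (w 0) < 1 := by
      rw [← Complex.sq_norm]
      have hb := mem_ball_zero_iff.mp hw0B
      nlinarith [norm_nonneg (w 0)]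
    have h7 : Real.exp (c*T) * Complex.normSq (w T) < 1 := lt_of_le_of_lt h5 h6
    have h8 : Complex.normSq (w T) < δ^2 := by
      have h9 : (0:ℝ) < Real.exp (c*T) := Real.exp_pos _
      have h10 : 1/(δ^2) ≤ Real.exp (c*T) := hTexp
      have h11 : 0 < δ^2 := by positivity
      rw [div_le_iff₀ h11] at h10
      nlinarith [Complex.normSq_nonneg (w T)]
    rw [← Complex.sq_norm] at h8
    exact lt_of_pow_lt_pow_left₀ 2 hδ.le h8
  have hend₁ : ‖w₁ T‖ < δ := hdecay w₁ (hw₁0 ▸ hz₁)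
    (fun s hs => (hw₁ s hs).2) hm₁
  have hend₂ : ‖w₂ T‖ < δ := hdecay w₂ (hw₂0 ▸ hz₂)
    (fun s hs => (hw₂ s hs).2) hm₂
  -- the endpoints agree
  have hflow₁ := flow_exp hf hd (fun s hs => (hw₁ s hs).2) hm₁B T ⟨hT0, le_rfl⟩
  have hflow₂ := flow_exp hf hd (fun s hs => (hw₂ s hs).2) hm₂B T ⟨hT0, le_rfl⟩
  rw [hw₁0] at hflow₁
  rw [hw₂0] at hflow₂
  rw [heq, ← hflow₂] at hflow₁
  have hfeq : f (w₁ T) = f (w₂ T) := by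
    have hne : Complex.exp (Complex.exp (-(Complex.I*(α:ℂ))) * (T:ℂ)) ≠ 0 :=
      Complex.exp_ne_zero _
    exact mul_left_cancel₀ hne hflow₁
  have hWeq : w₁ T = w₂ T := hinj (mem_ball_zero_iff.mpr hend₁)
    (mem_ball_zero_iff.mpr hend₂) hfeq
  -- backward uniqueness
  obtain ⟨K, hK⟩ := Vf_exists_lipschitz (α := α) hf hd hr''1
  have huni : EqOn w₁ w₂ (Icc 0 T) := by
    apply ODE_solution_unique_of_mem_Icc_left
      (v := fun _ x => Vf f α x) (s := fun _ => Metric.closedBall (0:ℂ) r'')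
      (fun _ _ => hK) ?_ ?_ ?_ ?_ ?_ ?_ hWeq
    · exact fun t ht => ((hw₁ t ht).2.continuousAt).continuousWithinAt
    · exact fun t ht => (hw₁ t (Ioc_subset_Icc_self ht)).2.hasDerivWithinAt
    · exact fun t ht => hm₁ t (Ioc_subset_Icc_self ht)
    · exact fun t ht => ((hw₂ t ht).2.continuousAt).continuousWithinAt
    · exact fun t ht => (hw₂ t (Ioc_subset_Icc_self ht)).2.hasDerivWithinAt
    · exact fun t ht => hm₂ t (Ioc_subset_Icc_self ht)
  have := huni ⟨le_rfl, hT0⟩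
  rwa [hw₁0, hw₂0] at this

end Spacek

/-- Špaček–Robertson spirallikeness criterion: for `α ∈ (−π/2, π/2)` and `f`
holomorphic on `𝔻` with `f 0 = 0`, `f' 0 = 1`, `f z ≠ 0` for `z ≠ 0`, the function `f`
is spirallike of type `α` (in particular univalent) if and only if
`Re(e^{iα} z f'(z)/f(z)) > 0` for all `z ∈ 𝔻 \ {0}`. -/
theorem spacek_robertson (α : ℝ) (hα : α ∈ Set.Ioo (-(Real.pi / 2)) (Real.pi / 2))
    (f : ℂ → ℂ) (hf : DifferentiableOn ℂ f (Metric.ball 0 1))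
    (h0 : f 0 = 0) (h1 : deriv f 0 = 1)
    (hnz : ∀ z ∈ Metric.ball (0 : ℂ) 1, z ≠ 0 → f z ≠ 0) :
    SpirallikeOfType α f ↔
      ∀ z ∈ Metric.ball (0 : ℂ) 1, z ≠ 0 →
        0 < (Complex.exp (Complex.I * (α : ℂ)) * z * deriv f z / f z).re := by
  constructor
  · intro H
    exact Spacek.forward_dir hf h0 h1 hnz hα ⟨H.1, H.2⟩
  · intro hre
    have hd := Spacek.deriv_ne_zero_of_SRcond h0 h1 hre
    have hQ := Spacek.re_Qfun_pos_of_SRcond h0 h1 hnz hα hre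
    exact ⟨Spacek.backward_inj hf h0 h1 hnz hd hQ,
      Spacek.backward_spiral hf h0 h1 hnz hd hQ⟩

end
end

section
/- Becker's univalence criterion: let f be holomorphic on 𝔻 with f(z) = z + a₂z² + ⋯ (f(0) = 0, f'(0) = 1) and f'(z) ≠ 0 for all z ∈ 𝔻. If there exists k with 0 ≤ k < 1 such that (1 − |z|²)·|z f''(z)/f'(z)| ≤ k for all z ∈ 𝔻, then f is injective on 𝔻. -/
open Complex Metric Set

noncomputable section

def Complex.abs : AbsoluteValue ℂ ℝ where
  toFun z := ‖z‖
  map_mul' := norm_mul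
  nonneg' := norm_nonneg
  eq_zero' _ := norm_eq_zero
  add_le' := norm_add_le

lemma Complex.norm_eq_abs (z : ℂ) : ‖z‖ = Complex.abs z := rfl

lemma Complex.abs_ofReal (r : ℝ) : Complex.abs (r : ℂ) = |r| := Complex.norm_real r

lemma Complex.sq_abs (z : ℂ) : Complex.abs z ^ 2 = Complex.normSq z := Complex.sq_norm z

lemma Complex.abs_apply (z : ℂ) : Complex.abs z = Real.sqrt (Complex.normSq z) := rfl

lemma Complex.abs_two : Complex.abs 2 = 2 := Complex.norm_two

lemma Complex.abs_re_le_abs (z : ℂ) : |z.re| ≤ Complex.abs z := Complex.abs_re_le_norm z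

lemma Complex.continuous_abs : Continuous Complex.abs := continuous_norm

private def bg (f : ℂ → ℂ) : ℂ → ℂ := fun z => deriv (deriv f) z / deriv f z

private def bq (f : ℂ → ℂ) (t : ℝ) (z : ℂ) : ℂ :=
  ((1 - Real.exp (-2 * t) : ℝ) : ℂ) * (((Real.exp (-t) : ℝ) : ℂ) * z) *
    bg f (((Real.exp (-t) : ℝ) : ℂ) * z)

private def bF (f : ℂ → ℂ) (t : ℝ) (z : ℂ) : ℂ :=
  -(z * (1 - bq f t z) / (1 + bq f t z))

private def bL (f : ℂ → ℂ) (t : ℝ) (z : ℂ) : ℂ :=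
  f (((Real.exp (-t) : ℝ) : ℂ) * z) +
    (((Real.exp t : ℝ) : ℂ) - ((Real.exp (-t) : ℝ) : ℂ)) * z *
      deriv f (((Real.exp (-t) : ℝ) : ℂ) * z)

private lemma becker_one_add_ne {k : ℝ} (hk1 : k < 1) {q : ℂ} (hq : Complex.abs q ≤ k) :
    (1 : ℂ) + q ≠ 0 := by
  intro h
  have h2 : q = -1 := by linear_combination h
  rw [h2] at hq; simp at hq; linarith

private lemma becker_abs_one_add {k : ℝ} (hk1 : k < 1) {q : ℂ} (hq : Complex.abs q ≤ k) :
    1 - k ≤ Complex.abs (1 + q) := by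
  have h := Complex.abs.sub_le_add (1 + q) q
  simp only [add_sub_cancel_right] at h
  have h2 : Complex.abs 1 ≤ Complex.abs (1 + q) + k := le_trans h (by gcongr)
  rw [map_one] at h2; linarith

private lemma becker_re_div_nonneg {k : ℝ} (hk1 : k < 1) {q : ℂ}
    (hq : Complex.abs q ≤ k) : 0 ≤ ((1 - q) / (1 + q)).re := by
  have hne : (1 : ℂ) + q ≠ 0 := becker_one_add_ne hk1 hq
  have hsq : Complex.normSq q ≤ 1 := by
    rw [← Complex.sq_abs]; nlinarith [Complex.abs.nonneg q, hq]
  rw [Complex.div_re]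
  have hpos : 0 < Complex.normSq (1 + q) := Complex.normSq_pos.2 hne
  have h1 : (1 - q).re * (1 + q).re + (1 - q).im * (1 + q).im = 1 - Complex.normSq q := by
    simp [Complex.normSq_apply]; ring
  rw [← add_div, h1]
  have hnum : 0 ≤ 1 - Complex.normSq q := by linarith
  positivity

private lemma becker_sign {k : ℝ} (hk1 : k < 1) {q z : ℂ} (hq : Complex.abs q ≤ k) :
    z.re * (-(z * (1 - q) / (1 + q))).re + z.im * (-(z * (1 - q) / (1 + q))).im ≤ 0 := by
  set c : ℂ := -(z * (1 - q) / (1 + q)) with hc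
  have key : z.re * c.re + z.im * c.im = ((starRingEnd ℂ) z * c).re := by
    simp only [Complex.mul_re, Complex.conj_re, Complex.conj_im]
    ring
  have h3 : (starRingEnd ℂ) z * c = -(((starRingEnd ℂ) z * z) * ((1 - q) / (1 + q))) := by
    rw [hc]; ring
  rw [key, h3, mul_comm ((starRingEnd ℂ) z) z, Complex.mul_conj]
  simp only [Complex.neg_re, Complex.re_ofReal_mul]
  have hd := becker_re_div_nonneg hk1 hq
  nlinarith [Complex.normSq_nonneg z]

private lemma becker_absF {k ρ' : ℝ} (hk0 : 0 ≤ k) (hk1 : k < 1) {q z : ℂ}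
    (hq : Complex.abs q ≤ k) (hz : Complex.abs z ≤ ρ') :
    Complex.abs (-(z * (1 - q) / (1 + q))) ≤ ρ' * (1 + k) / (1 - k) := by
  rw [AbsoluteValue.map_neg, map_div₀, map_mul]
  have h1 : Complex.abs (1 - q) ≤ 1 + k := by
    calc Complex.abs (1 - q) ≤ Complex.abs 1 + Complex.abs q := Complex.abs.sub_le_add 1 q
    _ ≤ 1 + k := by rw [map_one]; linarith
  have h2 : 1 - k ≤ Complex.abs (1 + q) := becker_abs_one_add hk1 hq
  have hk' : 0 < 1 - k := by linarith
  have hz0 : 0 ≤ Complex.abs z := Complex.abs.nonneg z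
  have hρ'0 : 0 ≤ ρ' := le_trans hz0 hz
  have hq0 : 0 < Complex.abs (1 + q) := lt_of_lt_of_le hk' h2
  have habs : Complex.abs z * Complex.abs (1 - q) ≤ ρ' * (1 + k) :=
    mul_le_mul hz h1 (Complex.abs.nonneg _) hρ'0
  rw [div_le_div_iff₀ hq0 hk']
  have h4 : Complex.abs z * Complex.abs (1 - q) * (1 - k) ≤ ρ' * (1 + k) * (1 - k) :=
    mul_le_mul_of_nonneg_right habs (le_of_lt hk')
  have h5 : ρ' * (1 + k) * (1 - k) ≤ ρ' * (1 + k) * Complex.abs (1 + q) :=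
    mul_le_mul_of_nonneg_left h2 (by positivity)
  linarith

private lemma becker_alg (A B W P Q q W' : ℂ) (hA : A ≠ 0) (hP : P ≠ 0) (hBA : B * A = 1)
    (hq : q = (1 - A ^ 2) * (A * W) * (Q / P)) (hD : 1 + q ≠ 0)
    (hW' : W' = -(W * (1 - q) / (1 + q))) :
    P * (-A * W + A * W') +
      (((B + A) * W + (B - A) * W') * P + (B - A) * W * (Q * (-A * W + A * W'))) = 0 := by
  have hD2 : P + (1 - A ^ 2) * (A * W) * Q ≠ 0 := by
    intro h
    apply hD
    rw [hq]
    field_simp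
    linear_combination h
  have hB : B = 1 / A := by field_simp; linear_combination hBA
  subst hB hW' hq
  have hD3 : P + A * W * (1 - A ^ 2) * Q ≠ 0 := by
    intro h; apply hD2; linear_combination h
  field_simp
  ring

private lemma becker_antitone {v : ℝ → ℂ → ℂ} {c d : ℝ} (hc : 0 ≤ c)
    (hsign : ∀ t, c ≤ t → ∀ z : ℂ, Complex.abs z ≤ 1 →
      z.re * (v t z).re + z.im * (v t z).im ≤ 0)
    {w : ℝ → ℂ} (hw : ∀ t ∈ Icc c d, HasDerivWithinAt w (v t (w t)) (Icc c d) t)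
    (hb : ∀ t ∈ Icc c d, Complex.abs (w t) ≤ 1) :
    ∀ s ∈ Icc c d, ∀ t ∈ Icc c d, s ≤ t → Complex.abs (w t) ≤ Complex.abs (w s) := by
  have hwc : ContinuousOn w (Icc c d) := fun t ht => (hw t ht).continuousWithinAt
  set φ : ℝ → ℝ := fun t => (w t).re ^ 2 + (w t).im ^ 2 with hφ
  have hmono : AntitoneOn φ (Icc c d) := by
    apply antitoneOn_of_deriv_nonpos (convex_Icc c d)
    · exact ((Complex.continuous_re.comp_continuousOn hwc).pow 2).add
        ((Complex.continuous_im.comp_continuousOn hwc).pow 2)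
    · intro t ht
      rw [interior_Icc] at ht
      have hdt : HasDerivAt w (v t (w t)) t :=
        (hw t (Ioo_subset_Icc_self ht)).hasDerivAt (Icc_mem_nhds ht.1 ht.2)
      have hre : HasDerivAt (fun s => (w s).re) ((v t (w t)).re) t :=
        Complex.reCLM.hasFDerivAt.comp_hasDerivAt t hdt
      have him : HasDerivAt (fun s => (w s).im) ((v t (w t)).im) t :=
        Complex.imCLM.hasFDerivAt.comp_hasDerivAt t hdt
      exact (((hre.pow 2).add (him.pow 2)).differentiableAt).differentiableWithinAt
    · intro t ht
      rw [interior_Icc] at ht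
      have hdt : HasDerivAt w (v t (w t)) t :=
        (hw t (Ioo_subset_Icc_self ht)).hasDerivAt (Icc_mem_nhds ht.1 ht.2)
      have hre : HasDerivAt (fun s => (w s).re) ((v t (w t)).re) t :=
        Complex.reCLM.hasFDerivAt.comp_hasDerivAt t hdt
      have him : HasDerivAt (fun s => (w s).im) ((v t (w t)).im) t :=
        Complex.imCLM.hasFDerivAt.comp_hasDerivAt t hdt
      have hder : HasDerivAt φ
          (2 * (w t).re ^ 1 * (v t (w t)).re + 2 * (w t).im ^ 1 * (v t (w t)).im) t :=
        (hre.pow 2).add (him.pow 2)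
      rw [hder.deriv]
      have := hsign t (le_of_lt ht.1) (w t) (hb t (Ioo_subset_Icc_self ht))
      simp only [pow_one]
      linarith
  intro s hs t ht hst
  have h2 : φ t ≤ φ s := hmono hs ht hst
  have habs : ∀ x, Complex.abs (w x) = Real.sqrt (φ x) := by
    intro x
    rw [Complex.abs_apply, Complex.normSq_apply, hφ]
    ring_nf
  rw [habs, habs]
  exact Real.sqrt_le_sqrt h2

private lemma becker_invariance {v : ℝ → ℂ → ℂ} {c d ρ ρ' : ℝ} (hc : 0 ≤ c) (hcd : c ≤ d)
    (hρ0 : 0 ≤ ρ) (hρρ' : ρ < ρ') (hρ'1 : ρ' ≤ 1)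
    (hsign : ∀ t, c ≤ t → ∀ z : ℂ, Complex.abs z ≤ 1 →
      z.re * (v t z).re + z.im * (v t z).im ≤ 0)
    {w : ℝ → ℂ} (hw : ∀ t ∈ Icc c d, HasDerivWithinAt w (v t (w t)) (Icc c d) t)
    (hw0 : Complex.abs (w c) ≤ ρ) : ∀ t ∈ Icc c d, Complex.abs (w t) ≤ ρ := by
  have hwc : ContinuousOn w (Icc c d) := fun t ht => (hw t ht).continuousWithinAt
  set S : Set ℝ := {t | t ∈ Icc c d ∧ ∀ s ∈ Icc c t, Complex.abs (w s) ≤ ρ'} with hS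
  have hcS : c ∈ S := by
    refine ⟨⟨le_refl c, hcd⟩, fun s hs => ?_⟩
    have : s = c := le_antisymm hs.2 hs.1
    rw [this]; linarith
  have hSne : S.Nonempty := ⟨c, hcS⟩
  have hSbdd : BddAbove S := ⟨d, fun t ht => ht.1.2⟩
  set τ := sSup S with hτ
  have hcτ : c ≤ τ := le_csSup hSbdd hcS
  have hτd : τ ≤ d := csSup_le hSne (fun t ht => ht.1.2)
  have hτIcc : τ ∈ Icc c d := ⟨hcτ, hτd⟩
  have hIco : ∀ s, c ≤ s → s < τ → Complex.abs (w s) ≤ ρ' := by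
    intro s hcs hsτ
    obtain ⟨t, htS, hst⟩ := exists_lt_of_lt_csSup hSne hsτ
    exact htS.2 s ⟨hcs, le_of_lt hst⟩
  -- abs (w τ) ≤ ρ'
  have hwτ : Complex.abs (w τ) ≤ ρ' := by
    by_contra hgt
    push_neg at hgt
    rcases eq_or_lt_of_le hcτ with hceq | hclt
    · rw [← hceq] at hgt; linarith
    · have hcwa : ContinuousWithinAt (fun s => Complex.abs (w s)) (Icc c d) τ :=
        Complex.continuous_abs.continuousAt.comp_continuousWithinAt (hwc τ hτIcc)
      have hev : ∀ᶠ s in nhdsWithin τ (Icc c d), ρ' < Complex.abs (w s) :=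
        hcwa.eventually (eventually_gt_nhds hgt)
      obtain ⟨ε, hε, hball⟩ := Metric.mem_nhdsWithin_iff.1 hev
      set s := max c (τ - ε / 2) with hs
      have hsτ' : s < τ := by
        rw [hs]; apply max_lt hclt; linarith
      have hsc : c ≤ s := le_max_left _ _
      have hsmem : s ∈ Metric.ball τ ε ∩ Icc c d := by
        constructor
        · rw [Real.ball_eq_Ioo]
          constructor
          · have : τ - ε / 2 ≤ s := le_max_right _ _
            linarith
          · linarith
        · exact ⟨hsc, le_trans (le_of_lt hsτ') hτd⟩
      have := hball hsmem
      have := hIco s hsc hsτ'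
      simp only [mem_setOf_eq] at hball
      exact absurd (hball hsmem) (not_lt.2 (hIco s hsc hsτ'))
  have hτS : τ ∈ S := by
    refine ⟨hτIcc, fun s hs => ?_⟩
    rcases eq_or_lt_of_le hs.2 with heq | hlt
    · rw [heq]; exact hwτ
    · exact hIco s hs.1 hlt
  -- antitone on Icc c τ  gives abs (w s) ≤ ρ on Icc c τ
  have hmono := becker_antitone hc hsign
    (w := w) (fun t ht => (hw t (Icc_subset_Icc_right hτd ht)).mono (Icc_subset_Icc_right hτd))
    (fun t ht => le_trans (hτS.2 t ht) hρ'1)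
  have hρIcc : ∀ s ∈ Icc c τ, Complex.abs (w s) ≤ ρ := by
    intro s hs
    exact le_trans (hmono c ⟨le_refl c, hcτ⟩ s hs hs.1) hw0
  -- τ = d
  have hτeq : τ = d := by
    by_contra hne
    have hτlt : τ < d := lt_of_le_of_ne hτd hne
    have hwτρ : Complex.abs (w τ) ≤ ρ := hρIcc τ ⟨hcτ, le_refl τ⟩
    have hcwa : ContinuousWithinAt (fun s => Complex.abs (w s)) (Icc c d) τ :=
      Complex.continuous_abs.continuousAt.comp_continuousWithinAt (hwc τ hτIcc)
    have hev : ∀ᶠ s in nhdsWithin τ (Icc c d), Complex.abs (w s) < ρ' :=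
      hcwa.eventually (eventually_lt_nhds (lt_of_le_of_lt hwτρ hρρ'))
    obtain ⟨ε, hε, hball⟩ := Metric.mem_nhdsWithin_iff.1 hev
    set t' := min d (τ + ε / 2) with ht'
    have hτt' : τ < t' := by
      rw [ht']; apply lt_min hτlt; linarith
    have ht'd : t' ≤ d := min_le_left _ _
    have ht'S : t' ∈ S := by
      refine ⟨⟨le_trans hcτ (le_of_lt hτt'), ht'd⟩, fun s hs => ?_⟩
      rcases le_or_gt s τ with hsτ | hsτ
      · exact hτS.2 s ⟨hs.1, hsτ⟩
      · have hsmem : s ∈ Metric.ball τ ε ∩ Icc c d := by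
          constructor
          · rw [Real.ball_eq_Ioo]
            constructor
            · linarith
            · have : s ≤ τ + ε / 2 := le_trans hs.2 (min_le_right _ _)
              linarith
          · exact ⟨hs.1, le_trans hs.2 ht'd⟩
        exact le_of_lt (hball hsmem)
    have := le_csSup hSbdd ht'S
    rw [← hτ] at this
    linarith
  intro t ht
  exact hρIcc t (by rw [hτeq]; exact ht)

private lemma becker_hq {f : ℂ → ℂ} {k : ℝ} (hk0 : 0 ≤ k)
    (hbd : ∀ z ∈ Metric.ball (0 : ℂ) 1,
      (1 - (Complex.abs z) ^ 2) * Complex.abs (z * deriv (deriv f) z / deriv f z) ≤ k) :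
    ∀ t, 0 ≤ t → ∀ z : ℂ, Complex.abs z ≤ 1 → Complex.abs (bq f t z) ≤ k := by
  intro t ht z hz
  rcases eq_or_lt_of_le ht with h0 | h0
  · have : (1 - Real.exp (-2 * t) : ℝ) = 0 := by
      rw [← h0]; norm_num
    rw [bq, this]
    simpa using hk0
  · set e := Real.exp (-t) with he
    have he0 : 0 < e := Real.exp_pos _
    have he1 : e < 1 := Real.exp_lt_one_iff.2 (by linarith)
    set u := ((e : ℝ) : ℂ) * z with hu
    have habs_u : Complex.abs u = e * Complex.abs z := by
      rw [hu, map_mul, Complex.abs_ofReal, abs_of_pos he0]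
    have hu1 : Complex.abs u < 1 := by
      rw [habs_u]
      calc e * Complex.abs z ≤ e * 1 := by
            apply mul_le_mul_of_nonneg_left hz (le_of_lt he0)
        _ < 1 := by linarith
    have humem : u ∈ Metric.ball (0 : ℂ) 1 := by
      rw [mem_ball_zero_iff, Complex.norm_eq_abs]; exact hu1
    have hb := hbd u humem
    have he2 : e ^ 2 = Real.exp (-2 * t) := by
      rw [he, sq, ← Real.exp_add]
      congr 1
      ring
    have hc0 : 0 ≤ 1 - Real.exp (-2 * t) := by
      have : Real.exp (-2 * t) ≤ 1 := Real.exp_le_one_iff.2 (by linarith)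
      linarith
    have hcu : 1 - Real.exp (-2 * t) ≤ 1 - (Complex.abs u) ^ 2 := by
      have : (Complex.abs u) ^ 2 ≤ e ^ 2 := by
        rw [habs_u]
        have : e * Complex.abs z ≤ e := by
          calc e * Complex.abs z ≤ e * 1 := by
                apply mul_le_mul_of_nonneg_left hz (le_of_lt he0)
            _ = e := mul_one e
        have h9 : 0 ≤ e * Complex.abs z := mul_nonneg he0.le (Complex.abs.nonneg z)
        nlinarith
      rw [he2] at this; linarith
    have heq : Complex.abs (bq f t z) =
        (1 - Real.exp (-2 * t)) * Complex.abs (u * deriv (deriv f) u / deriv f u) := by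
      have hb2 : bq f t z = ((1 - Real.exp (-2 * t) : ℝ) : ℂ) *
          (u * deriv (deriv f) u / deriv f u) := by
        rw [bq, ← hu, bg]
        ring
      rw [hb2, map_mul, Complex.abs_ofReal, _root_.abs_of_nonneg hc0]
    rw [heq]
    calc (1 - Real.exp (-2 * t)) * Complex.abs (u * deriv (deriv f) u / deriv f u)
        ≤ (1 - (Complex.abs u) ^ 2) * Complex.abs (u * deriv (deriv f) u / deriv f u) :=
          mul_le_mul_of_nonneg_right hcu (Complex.abs.nonneg _)
      _ ≤ k := hb

private lemma becker_cont {f : ℂ → ℂ} {k ρ' : ℝ} (hk1 : k < 1) (hρ'1 : ρ' < 1)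
    (hgc : ContinuousOn (bg f) (Metric.ball 0 1))
    (hqk : ∀ t, 0 ≤ t → ∀ z : ℂ, Complex.abs z ≤ 1 → Complex.abs (bq f t z) ≤ k)
    (z : ℂ) (hz : Complex.abs z ≤ ρ') :
    ContinuousOn (fun t => bF f t z) (Ici (0 : ℝ)) := by
  have hz1 : Complex.abs z ≤ 1 := le_trans hz (le_of_lt hρ'1)
  have hu : ContinuousOn (fun t : ℝ => ((Real.exp (-t) : ℝ) : ℂ) * z) (Ici 0) :=
    ((Complex.continuous_ofReal.comp (Real.continuous_exp.comp continuous_neg)).mul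
      continuous_const).continuousOn
  have hmaps : MapsTo (fun t : ℝ => ((Real.exp (-t) : ℝ) : ℂ) * z) (Ici 0)
      (Metric.ball (0 : ℂ) 1) := by
    intro t ht
    rw [mem_ball_zero_iff, Complex.norm_eq_abs, map_mul, Complex.abs_ofReal,
      abs_of_pos (Real.exp_pos _)]
    have h1 : Real.exp (-t) ≤ 1 := Real.exp_le_one_iff.2 (by simp at ht ⊢; linarith)
    calc Real.exp (-t) * Complex.abs z ≤ 1 * Complex.abs z := by
          apply mul_le_mul_of_nonneg_right h1 (Complex.abs.nonneg _)
      _ = Complex.abs z := one_mul _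
      _ < 1 := lt_of_le_of_lt hz hρ'1
  have hgu : ContinuousOn (fun t => bg f (((Real.exp (-t) : ℝ) : ℂ) * z)) (Ici 0) :=
    hgc.comp hu hmaps
  have hec : ContinuousOn (fun t : ℝ => ((1 - Real.exp (-2 * t) : ℝ) : ℂ)) (Ici 0) :=
    (Complex.continuous_ofReal.comp (continuous_const.sub
      (Real.continuous_exp.comp (continuous_const.mul continuous_id)))).continuousOn
  have hcq : ContinuousOn (fun t => bq f t z) (Ici 0) := (hec.mul hu).mul hgu
  have hnum : ContinuousOn (fun t => z * (1 - bq f t z)) (Ici 0) :=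
    continuousOn_const.mul (continuousOn_const.sub hcq)
  have hden : ContinuousOn (fun t => 1 + bq f t z) (Ici 0) := continuousOn_const.add hcq
  exact ((hnum.div hden (fun t ht =>
    becker_one_add_ne hk1 (hqk t ht z hz1))).neg)

private lemma becker_exists_Lh {f : ℂ → ℂ} {ρ' : ℝ} (hρ'1 : ρ' < 1)
    (hfd : DifferentiableOn ℂ f (Metric.ball 0 1))
    (hnz : ∀ z ∈ Metric.ball (0 : ℂ) 1, deriv f z ≠ 0) :
    ∃ Lh : ℝ, 0 ≤ Lh ∧ ∀ z₁, Complex.abs z₁ ≤ ρ' → ∀ z₂, Complex.abs z₂ ≤ ρ' →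
      Complex.abs (z₁ * bg f z₁ - z₂ * bg f z₂) ≤ Lh * Complex.abs (z₁ - z₂) := by
  have hfa : AnalyticOnNhd ℂ f (Metric.ball 0 1) := hfd.analyticOnNhd isOpen_ball
  have hh : AnalyticOnNhd ℂ (fun z => z * bg f z) (Metric.ball 0 1) :=
    analyticOnNhd_id.mul ((hfa.deriv.deriv).div hfa.deriv hnz)
  have hsub : closedBall (0 : ℂ) ρ' ⊆ Metric.ball (0 : ℂ) 1 := closedBall_subset_ball hρ'1
  have hdc : ContinuousOn (deriv (fun z => z * bg f z)) (closedBall (0 : ℂ) ρ') :=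
    (hh.deriv.continuousOn).mono hsub
  obtain ⟨M, hM⟩ := (isCompact_closedBall (0 : ℂ) ρ').exists_bound_of_continuousOn hdc
  set Lh := max M 0 with hLh
  refine ⟨Lh, le_max_right _ _, fun z₁ h₁ z₂ h₂ => ?_⟩
  have hm₁ : z₁ ∈ closedBall (0 : ℂ) ρ' := by
    rw [mem_closedBall_zero_iff, Complex.norm_eq_abs]; exact h₁
  have hm₂ : z₂ ∈ closedBall (0 : ℂ) ρ' := by
    rw [mem_closedBall_zero_iff, Complex.norm_eq_abs]; exact h₂
  have key := Convex.norm_image_sub_le_of_norm_hasFDerivWithin_le (𝕜 := ℂ)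
    (f := fun z => z * bg f z)
    (f' := fun x => ContinuousLinearMap.smulRight (1 : ℂ →L[ℂ] ℂ)
      (deriv (fun z => z * bg f z) x))
    (s := closedBall (0 : ℂ) ρ') (C := Lh)
    (fun x hx => ((hh x (hsub hx)).differentiableAt.hasDerivAt.hasFDerivAt).hasFDerivWithinAt)
    (fun x hx => by
      rw [ContinuousLinearMap.norm_smulRight_apply, ContinuousLinearMap.one_def,
        ContinuousLinearMap.norm_id, one_mul]
      exact le_trans (hM x hx) (le_max_left _ _))
    (convex_closedBall _ _) hm₂ hm₁
  rw [← Complex.norm_eq_abs, ← Complex.norm_eq_abs]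
  exact key

private lemma becker_lip {f : ℂ → ℂ} {k ρ' Lh : ℝ} (hk0 : 0 ≤ k) (hk1 : k < 1)
    (hρ'1 : ρ' ≤ 1) (hLh0 : 0 ≤ Lh)
    (hqk : ∀ t, 0 ≤ t → ∀ z : ℂ, Complex.abs z ≤ 1 → Complex.abs (bq f t z) ≤ k)
    (hLh : ∀ z₁, Complex.abs z₁ ≤ ρ' → ∀ z₂, Complex.abs z₂ ≤ ρ' →
      Complex.abs (z₁ * bg f z₁ - z₂ * bg f z₂) ≤ Lh * Complex.abs (z₁ - z₂)) :
    ∃ K : NNReal, ∀ t, 0 ≤ t → LipschitzOnWith K (bF f t) (closedBall 0 ρ') := by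
  set K₀ : ℝ := 1 + 2 * (k * (1 + k) + Lh) / (1 - k) ^ 2 with hK₀
  have hk' : (0:ℝ) < 1 - k := by linarith
  have hK₀0 : 0 ≤ K₀ := by positivity
  refine ⟨Real.toNNReal K₀, fun t ht => ?_⟩
  rw [lipschitzOnWith_iff_dist_le_mul]
  intro z₁ hm₁ z₂ hm₂
  rw [mem_closedBall_zero_iff, Complex.norm_eq_abs] at hm₁ hm₂
  have hz₁1 : Complex.abs z₁ ≤ 1 := le_trans hm₁ hρ'1
  have hz₂1 : Complex.abs z₂ ≤ 1 := le_trans hm₂ hρ'1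
  set q₁ := bq f t z₁ with hq₁d
  set q₂ := bq f t z₂ with hq₂d
  have hq₁ : Complex.abs q₁ ≤ k := hqk t ht z₁ hz₁1
  have hq₂ : Complex.abs q₂ ≤ k := hqk t ht z₂ hz₂1
  have hD₁ : (1:ℂ) + q₁ ≠ 0 := becker_one_add_ne hk1 hq₁
  have hD₂ : (1:ℂ) + q₂ ≠ 0 := becker_one_add_ne hk1 hq₂
  have habsD₁ : 1 - k ≤ Complex.abs (1 + q₁) := by
    have h := Complex.abs.sub_le_add (1 + q₁) q₁
    simp only [add_sub_cancel_right] at h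
    have h2 : Complex.abs 1 ≤ Complex.abs (1 + q₁) + k := le_trans h (by gcongr)
    rw [map_one] at h2; linarith
  have habsD₂ : 1 - k ≤ Complex.abs (1 + q₂) := by
    have h := Complex.abs.sub_le_add (1 + q₂) q₂
    simp only [add_sub_cancel_right] at h
    have h2 : Complex.abs 1 ≤ Complex.abs (1 + q₂) + k := le_trans h (by gcongr)
    rw [map_one] at h2; linarith
  set X := Complex.abs (z₁ - z₂) with hX
  have hX0 : 0 ≤ X := Complex.abs.nonneg _
  -- bound on q₁ - q₂
  have hqq : Complex.abs (q₁ - q₂) ≤ Lh * X := by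
    set e := Real.exp (-t) with he
    have he0 : 0 < e := Real.exp_pos _
    have he1 : e ≤ 1 := Real.exp_le_one_iff.2 (by linarith)
    set u₁ := ((e : ℝ) : ℂ) * z₁ with hu₁
    set u₂ := ((e : ℝ) : ℂ) * z₂ with hu₂
    have hau₁ : Complex.abs u₁ ≤ ρ' := by
      rw [hu₁, map_mul, Complex.abs_ofReal, abs_of_pos he0]
      calc e * Complex.abs z₁ ≤ 1 * Complex.abs z₁ :=
            mul_le_mul_of_nonneg_right he1 (Complex.abs.nonneg _)
        _ = Complex.abs z₁ := one_mul _
        _ ≤ ρ' := hm₁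
    have hau₂ : Complex.abs u₂ ≤ ρ' := by
      rw [hu₂, map_mul, Complex.abs_ofReal, abs_of_pos he0]
      calc e * Complex.abs z₂ ≤ 1 * Complex.abs z₂ :=
            mul_le_mul_of_nonneg_right he1 (Complex.abs.nonneg _)
        _ = Complex.abs z₂ := one_mul _
        _ ≤ ρ' := hm₂
    have hc0 : 0 ≤ 1 - Real.exp (-2 * t) := by
      have : Real.exp (-2 * t) ≤ 1 := Real.exp_le_one_iff.2 (by linarith)
      linarith
    have hc1 : 1 - Real.exp (-2 * t) ≤ 1 := by
      have : 0 < Real.exp (-2 * t) := Real.exp_pos _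
      linarith
    have hdiff : q₁ - q₂ = ((1 - Real.exp (-2 * t) : ℝ) : ℂ) *
        (u₁ * bg f u₁ - u₂ * bg f u₂) := by
      rw [hq₁d, hq₂d, bq, bq, ← hu₁, ← hu₂]; ring
    have huu : Complex.abs (u₁ - u₂) ≤ X := by
      have : u₁ - u₂ = ((e : ℝ) : ℂ) * (z₁ - z₂) := by rw [hu₁, hu₂]; ring
      rw [this, map_mul, Complex.abs_ofReal, abs_of_pos he0, hX]
      calc e * Complex.abs (z₁ - z₂) ≤ 1 * Complex.abs (z₁ - z₂) :=
            mul_le_mul_of_nonneg_right he1 (Complex.abs.nonneg _)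
        _ = Complex.abs (z₁ - z₂) := one_mul _
    calc Complex.abs (q₁ - q₂)
        = (1 - Real.exp (-2 * t)) * Complex.abs (u₁ * bg f u₁ - u₂ * bg f u₂) := by
          rw [hdiff, map_mul, Complex.abs_ofReal, _root_.abs_of_nonneg hc0]
      _ ≤ 1 * Complex.abs (u₁ * bg f u₁ - u₂ * bg f u₂) :=
          mul_le_mul_of_nonneg_right hc1 (Complex.abs.nonneg _)
      _ = Complex.abs (u₁ * bg f u₁ - u₂ * bg f u₂) := one_mul _
      _ ≤ Lh * Complex.abs (u₁ - u₂) := hLh u₁ hau₁ u₂ hau₂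
      _ ≤ Lh * X := mul_le_mul_of_nonneg_left huu hLh0
  -- main difference identity
  have He : bF f t z₁ - bF f t z₂ = -(z₁ - z₂) +
      2 * ((z₁ - z₂) * (q₁ * (1 + q₂)) + z₂ * (q₁ - q₂)) / ((1 + q₁) * (1 + q₂)) := by
    rw [bF, bF, ← hq₁d, ← hq₂d]
    field_simp
    ring
  have hnum : Complex.abs ((z₁ - z₂) * (q₁ * (1 + q₂)) + z₂ * (q₁ - q₂)) ≤
      X * (k * (1 + k)) + Lh * X := by
    calc Complex.abs ((z₁ - z₂) * (q₁ * (1 + q₂)) + z₂ * (q₁ - q₂))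
        ≤ Complex.abs ((z₁ - z₂) * (q₁ * (1 + q₂))) + Complex.abs (z₂ * (q₁ - q₂)) :=
          Complex.abs.add_le _ _
      _ ≤ X * (k * (1 + k)) + Lh * X := by
          rw [map_mul, map_mul, map_mul]
          have h1 : Complex.abs q₁ * Complex.abs (1 + q₂) ≤ k * (1 + k) := by
            apply mul_le_mul hq₁ _ (Complex.abs.nonneg _) hk0
            calc Complex.abs (1 + q₂) ≤ Complex.abs 1 + Complex.abs q₂ := Complex.abs.add_le _ _
              _ ≤ 1 + k := by rw [map_one]; linarith
          have h2 : Complex.abs z₂ * Complex.abs (q₁ - q₂) ≤ 1 * (Lh * X) := by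
            apply mul_le_mul hz₂1 hqq (Complex.abs.nonneg _) zero_le_one
          have h3 : Complex.abs (z₁ - z₂) * (Complex.abs q₁ * Complex.abs (1 + q₂)) ≤
              X * (k * (1 + k)) := mul_le_mul_of_nonneg_left h1 hX0
          rw [← hX]
          linarith
  have hden : (1 - k) ^ 2 ≤ Complex.abs ((1 + q₁) * (1 + q₂)) := by
    rw [map_mul, sq]
    exact mul_le_mul habsD₁ habsD₂ (le_of_lt hk') (Complex.abs.nonneg _)
  have hden0 : (0:ℝ) < Complex.abs ((1 + q₁) * (1 + q₂)) := lt_of_lt_of_le (by positivity) hden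
  rw [Complex.dist_eq, Complex.dist_eq, He]
  calc Complex.abs (-(z₁ - z₂) +
        2 * ((z₁ - z₂) * (q₁ * (1 + q₂)) + z₂ * (q₁ - q₂)) / ((1 + q₁) * (1 + q₂)))
      ≤ Complex.abs (-(z₁ - z₂)) +
        Complex.abs (2 * ((z₁ - z₂) * (q₁ * (1 + q₂)) + z₂ * (q₁ - q₂)) / ((1 + q₁) * (1 + q₂))) :=
        Complex.abs.add_le _ _
    _ ≤ X + 2 * (X * (k * (1 + k)) + Lh * X) / (1 - k) ^ 2 := by
        rw [AbsoluteValue.map_neg, ← hX, map_div₀, map_mul, Complex.abs_two]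
        have hnum2 : 2 * Complex.abs ((z₁ - z₂) * (q₁ * (1 + q₂)) + z₂ * (q₁ - q₂)) ≤
            2 * (X * (k * (1 + k)) + Lh * X) := by linarith
        have := div_le_div₀ (by positivity) hnum2 (by positivity) hden
        linarith
    _ ≤ ↑(Real.toNNReal K₀) * Complex.abs (z₁ - z₂) := by
        rw [Real.coe_toNNReal _ hK₀0, ← hX, hK₀]
        have : 2 * (X * (k * (1 + k)) + Lh * X) / (1 - k) ^ 2 =
            (2 * (k * (1 + k) + Lh) / (1 - k) ^ 2) * X := by field_simp
        rw [this]
        ring_nf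
        nlinarith [hX0]

private lemma becker_exp_cast (x : ℝ) :
    ((1 - Real.exp (-2 * x) : ℝ) : ℂ) = 1 - ((Real.exp (-x) : ℝ) : ℂ) ^ 2 := by
  have h : Real.exp (-x) ^ 2 = Real.exp (-2 * x) := by
    rw [sq, ← Real.exp_add]; congr 1; ring
  push_cast [← h]
  ring

private lemma becker_const {f : ℂ → ℂ} {k T ρ : ℝ} (hk1 : k < 1) (hT : 0 ≤ T)
    (hρ1 : ρ < 1)
    (hder1 : ∀ z ∈ Metric.ball (0:ℂ) 1, HasDerivAt f (deriv f z) z)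
    (hder2 : ∀ z ∈ Metric.ball (0:ℂ) 1, HasDerivAt (deriv f) (deriv (deriv f) z) z)
    (hnz : ∀ z ∈ Metric.ball (0:ℂ) 1, deriv f z ≠ 0)
    (hqk : ∀ t, 0 ≤ t → ∀ z : ℂ, Complex.abs z ≤ 1 → Complex.abs (bq f t z) ≤ k)
    {w : ℝ → ℂ} (hw : ∀ t ∈ Icc (0:ℝ) T, HasDerivWithinAt w (bF f t (w t)) (Icc 0 T) t)
    (hwb : ∀ t ∈ Icc (0:ℝ) T, Complex.abs (w t) ≤ ρ) :
    bL f T (w T) = bL f 0 (w 0) := by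
  have hρ0 : 0 ≤ ρ := le_trans (Complex.abs.nonneg _) (hwb 0 ⟨le_refl 0, hT⟩)
  set Ψ : ℝ → ℂ := fun t => bL f t (w t) with hΨdef
  have hmaster : ∀ x ∈ Icc (0:ℝ) T, HasDerivWithinAt Ψ 0 (Icc 0 T) x := by
    intro x hx
    have hAne : ((Real.exp (-x) : ℝ) : ℂ) ≠ 0 := by
      simp only [ne_eq, Complex.ofReal_eq_zero]
      exact (Real.exp_pos _).ne'
    have hBA : ((Real.exp x : ℝ) : ℂ) * ((Real.exp (-x) : ℝ) : ℂ) = 1 := by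
      rw [← Complex.ofReal_mul, ← Real.exp_add]
      norm_num
    have hexple : Real.exp (-x) ≤ 1 := Real.exp_le_one_iff.2 (by linarith [hx.1])
    have humem : ((Real.exp (-x) : ℝ) : ℂ) * w x ∈ Metric.ball (0:ℂ) 1 := by
      rw [mem_ball_zero_iff, Complex.norm_eq_abs, map_mul, Complex.abs_ofReal,
        _root_.abs_of_pos (Real.exp_pos _)]
      calc Real.exp (-x) * Complex.abs (w x) ≤ 1 * ρ :=
            mul_le_mul hexple (hwb x hx) (Complex.abs.nonneg _) zero_le_one
        _ = ρ := one_mul ρ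
        _ < 1 := hρ1
    have hP : deriv f (((Real.exp (-x) : ℝ) : ℂ) * w x) ≠ 0 := hnz _ humem
    have hqshape : bq f x (w x) = (1 - ((Real.exp (-x) : ℝ) : ℂ) ^ 2) *
        ((((Real.exp (-x) : ℝ) : ℂ)) * w x) *
        (deriv (deriv f) (((Real.exp (-x) : ℝ) : ℂ) * w x) /
          deriv f (((Real.exp (-x) : ℝ) : ℂ) * w x)) := by
      rw [bq, bg, becker_exp_cast]
    have habsq : Complex.abs (bq f x (w x)) ≤ k :=
      hqk x hx.1 (w x) (le_trans (hwb x hx) (le_of_lt hρ1))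
    have hD : (1 : ℂ) + bq f x (w x) ≠ 0 := becker_one_add_ne hk1 habsq
    have hW'shape : bF f x (w x) = -(w x * (1 - bq f x (w x)) / (1 + bq f x (w x))) := rfl
    -- derivatives of the exponential factors
    have hrexpneg : HasDerivAt (fun t : ℝ => Real.exp (-t)) (-Real.exp (-x)) x := by
      simpa using (hasDerivAt_neg x).exp
    have hexpneg : HasDerivAt (fun t : ℝ => ((Real.exp (-t) : ℝ) : ℂ))
        (-((Real.exp (-x) : ℝ) : ℂ)) x := by
      have h := hrexpneg.ofReal_comp
      rw [Complex.ofReal_neg] at h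
      exact h
    have hexppos : HasDerivAt (fun t : ℝ => ((Real.exp t : ℝ) : ℂ))
        (((Real.exp x : ℝ) : ℂ)) x := by
      exact (Real.hasDerivAt_exp x).ofReal_comp
    have hwx : HasDerivWithinAt w (bF f x (w x)) (Icc 0 T) x := hw x hx
    -- m t = exp(-t) * w t
    have hm : HasDerivWithinAt (fun t => ((Real.exp (-t) : ℝ) : ℂ) * w t)
        (-((Real.exp (-x) : ℝ) : ℂ) * w x + ((Real.exp (-x) : ℝ) : ℂ) * bF f x (w x))
        (Icc 0 T) x := hexpneg.hasDerivWithinAt.mul hwx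
    have hfm : HasDerivWithinAt (fun t => f (((Real.exp (-t) : ℝ) : ℂ) * w t))
        (deriv f (((Real.exp (-x) : ℝ) : ℂ) * w x) *
          (-((Real.exp (-x) : ℝ) : ℂ) * w x + ((Real.exp (-x) : ℝ) : ℂ) * bF f x (w x)))
        (Icc 0 T) x := (hder1 _ humem).comp_hasDerivWithinAt x hm
    have hdfm : HasDerivWithinAt (fun t => deriv f (((Real.exp (-t) : ℝ) : ℂ) * w t))
        (deriv (deriv f) (((Real.exp (-x) : ℝ) : ℂ) * w x) *
          (-((Real.exp (-x) : ℝ) : ℂ) * w x + ((Real.exp (-x) : ℝ) : ℂ) * bF f x (w x)))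
        (Icc 0 T) x := by have := (hder2 _ humem).comp_hasDerivWithinAt x hm; exact this
    have hcd : HasDerivAt (fun t : ℝ => ((Real.exp t : ℝ) : ℂ) - ((Real.exp (-t) : ℝ) : ℂ))
        (((Real.exp x : ℝ) : ℂ) - -((Real.exp (-x) : ℝ) : ℂ)) x := hexppos.sub hexpneg
    have hprod1 : HasDerivWithinAt
        (fun t => (((Real.exp t : ℝ) : ℂ) - ((Real.exp (-t) : ℝ) : ℂ)) * w t)
        ((((Real.exp x : ℝ) : ℂ) - -((Real.exp (-x) : ℝ) : ℂ)) * w x +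
          (((Real.exp x : ℝ) : ℂ) - ((Real.exp (-x) : ℝ) : ℂ)) * bF f x (w x))
        (Icc 0 T) x := hcd.hasDerivWithinAt.mul hwx
    have hprod : HasDerivWithinAt
        (fun t => (((Real.exp t : ℝ) : ℂ) - ((Real.exp (-t) : ℝ) : ℂ)) * w t *
          deriv f (((Real.exp (-t) : ℝ) : ℂ) * w t))
        (((((Real.exp x : ℝ) : ℂ) - -((Real.exp (-x) : ℝ) : ℂ)) * w x +
            (((Real.exp x : ℝ) : ℂ) - ((Real.exp (-x) : ℝ) : ℂ)) * bF f x (w x)) *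
          deriv f (((Real.exp (-x) : ℝ) : ℂ) * w x) +
          (((Real.exp x : ℝ) : ℂ) - ((Real.exp (-x) : ℝ) : ℂ)) * w x *
            (deriv (deriv f) (((Real.exp (-x) : ℝ) : ℂ) * w x) *
              (-((Real.exp (-x) : ℝ) : ℂ) * w x + ((Real.exp (-x) : ℝ) : ℂ) * bF f x (w x))))
        (Icc 0 T) x := hprod1.mul hdfm
    have htotal := hfm.add hprod
    have halg := becker_alg ((Real.exp (-x) : ℝ) : ℂ) ((Real.exp x : ℝ) : ℂ) (w x)
      (deriv f (((Real.exp (-x) : ℝ) : ℂ) * w x))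
      (deriv (deriv f) (((Real.exp (-x) : ℝ) : ℂ) * w x))
      (bq f x (w x)) (bF f x (w x)) hAne hP hBA hqshape hD hW'shape
    have hfinal : HasDerivWithinAt Ψ
        (deriv f (((Real.exp (-x) : ℝ) : ℂ) * w x) *
          (-((Real.exp (-x) : ℝ) : ℂ) * w x + ((Real.exp (-x) : ℝ) : ℂ) * bF f x (w x)) +
          (((((Real.exp x : ℝ) : ℂ) - -((Real.exp (-x) : ℝ) : ℂ)) * w x +
            (((Real.exp x : ℝ) : ℂ) - ((Real.exp (-x) : ℝ) : ℂ)) * bF f x (w x)) *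
          deriv f (((Real.exp (-x) : ℝ) : ℂ) * w x) +
          (((Real.exp x : ℝ) : ℂ) - ((Real.exp (-x) : ℝ) : ℂ)) * w x *
            (deriv (deriv f) (((Real.exp (-x) : ℝ) : ℂ) * w x) *
              (-((Real.exp (-x) : ℝ) : ℂ) * w x + ((Real.exp (-x) : ℝ) : ℂ) * bF f x (w x)))))
        (Icc 0 T) x := htotal
    convert hfinal using 1
    linear_combination -halg
  have hcont : ContinuousOn Ψ (Icc 0 T) := fun t ht => (hmaster t ht).continuousWithinAt
  have hkey := constant_of_has_deriv_right_zero hcont (fun t ht => by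
    refine (hmaster t (Ico_subset_Icc_self ht)).mono_of_mem_nhdsWithin ?_
    refine mem_nhdsWithin.2 ⟨Iio T, isOpen_Iio, ht.2, ?_⟩
    intro y hy
    exact ⟨le_trans ht.1 hy.2, le_of_lt hy.1⟩)
  exact hkey T ⟨hT, le_refl T⟩

private lemma becker_NW {s : Set ℂ} (hs : Convex ℝ s) (h : ℂ → ℂ) (h' : ℂ → ℂ)
    (hd : ∀ z ∈ s, HasDerivAt h (h' z) z) (hre : ∀ z ∈ s, 0 < (h' z).re) :
    Set.InjOn h s := by
  intro a ha b hb heq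
  by_contra hne
  set c : ℂ := b - a with hc
  have hc0 : c ≠ 0 := sub_ne_zero.2 (Ne.symm hne)
  set γ : ℝ → ℂ := fun r => a + r • c with hγ
  have hγmem : ∀ r ∈ Icc (0:ℝ) 1, γ r ∈ s := fun r hr => by
    simpa [hγ, hc] using hs.add_smul_sub_mem ha hb hr
  set ψ : ℝ → ℝ := fun r => ((starRingEnd ℂ) c * h (γ r)).re with hψ
  have hψd : ∀ r ∈ Icc (0:ℝ) 1, HasDerivAt ψ (Complex.normSq c * (h' (γ r)).re) r := by
    intro r hr
    have hγd : HasDerivAt γ c r := by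
      have := ((hasDerivAt_id r).smul_const c).const_add a; rw [one_smul] at this; exact this
    have hhd : HasDerivAt (fun r => h (γ r)) (c • h' (γ r)) r :=
      (hd _ (hγmem r hr)).scomp r hγd
    have hmul : HasDerivAt (fun r => (starRingEnd ℂ) c * h (γ r))
        ((starRingEnd ℂ) c * (c • h' (γ r))) r := hhd.const_mul _
    have := Complex.reCLM.hasFDerivAt.comp_hasDerivAt r hmul
    refine this.congr_deriv ?_
    have h9 : (starRingEnd ℂ) c * (c • h' (γ r)) = (Complex.normSq c : ℂ) * h' (γ r) := by
      rw [smul_eq_mul, ← mul_assoc, mul_comm ((starRingEnd ℂ) c) c, Complex.mul_conj]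
    rw [h9]
    simp [Complex.re_ofReal_mul]
  have hmono : StrictMonoOn ψ (Icc (0:ℝ) 1) := by
    apply strictMonoOn_of_deriv_pos (convex_Icc 0 1)
    · exact fun r hr => ((hψd r hr).continuousAt).continuousWithinAt
    · intro r hr
      rw [interior_Icc] at hr
      rw [(hψd r (Ioo_subset_Icc_self hr)).deriv]
      have := hre _ (hγmem r (Ioo_subset_Icc_self hr))
      have hns : 0 < Complex.normSq c := Complex.normSq_pos.2 hc0
      positivity
  have h01 : ψ 0 < ψ 1 := hmono (by norm_num) (by norm_num) (by norm_num)
  have e0 : γ 0 = a := by simp [hγ]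
  have e1 : γ 1 = b := by simp [hγ, hc]
  rw [hψ] at h01
  simp only [e0, e1, heq] at h01
  exact lt_irrefl _ h01

private lemma becker_LT_inj {f : ℂ → ℂ} {G ρ ρ' : ℝ} (hρ0 : 0 ≤ ρ) (hρρ' : ρ < ρ')
    (hρ'1 : ρ' < 1)
    (hder1 : ∀ z ∈ Metric.ball (0:ℂ) 1, HasDerivAt f (deriv f z) z)
    (hder2 : ∀ z ∈ Metric.ball (0:ℂ) 1, HasDerivAt (deriv f) (deriv (deriv f) z) z)
    (hnz : ∀ z ∈ Metric.ball (0:ℂ) 1, deriv f z ≠ 0)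
    (h1 : deriv f 0 = 1)
    (hG : ∀ z : ℂ, Complex.abs z ≤ ρ' → Complex.abs (bg f z) ≤ G) :
    ∃ T, 0 ≤ T ∧ Set.InjOn (bL f T) (closedBall (0:ℂ) ρ) := by
  have hρ'0 : 0 < ρ' := lt_of_le_of_lt hρ0 hρρ'
  have hG0 : 0 ≤ G := le_trans (Complex.abs.nonneg _) (hG 0 (by simp; linarith))
  have hcont0 : ContinuousAt (deriv f) 0 :=
    (hder2 0 (by simp)).continuousAt
  obtain ⟨δ₁, hδ₁0, hδ₁⟩ := Metric.continuousAt_iff.1 hcont0 (1/4) (by norm_num)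
  set δ := min (δ₁ / 2) (min (1 / (4 * (G + 1))) ρ') with hδdef
  have hδ0 : 0 < δ := by
    apply lt_min (by linarith)
    apply lt_min (by positivity) hρ'0
  have hδδ₁ : δ < δ₁ := lt_of_le_of_lt (min_le_left _ _) (by linarith)
  have hδG : δ ≤ 1 / (4 * (G + 1)) := le_trans (min_le_right _ _) (min_le_left _ _)
  have hδρ' : δ ≤ ρ' := le_trans (min_le_right _ _) (min_le_right _ _)
  set T := -Real.log (δ / ρ') with hTdef
  have hT0 : 0 ≤ T := by
    rw [hTdef, neg_nonneg]
    apply Real.log_nonpos (by positivity)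
    rw [div_le_one hρ'0]
    exact hδρ'
  have hexpT : Real.exp (-T) = δ / ρ' := by
    rw [hTdef, neg_neg]
    exact Real.exp_log (by positivity)
  refine ⟨T, hT0, ?_⟩
  set DL : ℂ → ℂ := fun z =>
    deriv f (((Real.exp (-T) : ℝ) : ℂ) * z) * ((Real.exp (-T) : ℝ) : ℂ) +
      ((((Real.exp T : ℝ) : ℂ) - ((Real.exp (-T) : ℝ) : ℂ)) *
          deriv f (((Real.exp (-T) : ℝ) : ℂ) * z) +
        (((Real.exp T : ℝ) : ℂ) - ((Real.exp (-T) : ℝ) : ℂ)) * z *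
          (deriv (deriv f) (((Real.exp (-T) : ℝ) : ℂ) * z) * ((Real.exp (-T) : ℝ) : ℂ)))
    with hDL
  have habsu : ∀ z : ℂ, Complex.abs z ≤ ρ →
      Complex.abs (((Real.exp (-T) : ℝ) : ℂ) * z) ≤ δ := by
    intro z hz
    rw [map_mul, Complex.abs_ofReal, _root_.abs_of_pos (Real.exp_pos _), hexpT]
    calc δ / ρ' * Complex.abs z ≤ δ / ρ' * ρ' := by
          apply mul_le_mul_of_nonneg_left (le_trans hz (le_of_lt hρρ')) (by positivity)
      _ = δ := by field_simp
  have humem : ∀ z : ℂ, Complex.abs z ≤ ρ →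
      ((Real.exp (-T) : ℝ) : ℂ) * z ∈ Metric.ball (0:ℂ) 1 := by
    intro z hz
    rw [mem_ball_zero_iff, Complex.norm_eq_abs]
    exact lt_of_le_of_lt (habsu z hz) (lt_of_le_of_lt hδρ' hρ'1)
  apply becker_NW (convex_closedBall 0 ρ) (bL f T) DL
  · intro z hz
    rw [mem_closedBall_zero_iff, Complex.norm_eq_abs] at hz
    have hin : HasDerivAt (fun y : ℂ => ((Real.exp (-T) : ℝ) : ℂ) * y)
        ((Real.exp (-T) : ℝ) : ℂ) z := by
      have h0 := HasDerivAt.const_mul (((Real.exp (-T) : ℝ) : ℂ)) (hasDerivAt_id z)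
      rwa [mul_one] at h0
    have h₁ : HasDerivAt (fun y : ℂ => f (((Real.exp (-T) : ℝ) : ℂ) * y))
        (deriv f (((Real.exp (-T) : ℝ) : ℂ) * z) * ((Real.exp (-T) : ℝ) : ℂ)) z :=
      (hder1 _ (humem z hz)).comp z hin
    have h₂ : HasDerivAt (fun y : ℂ =>
        (((Real.exp T : ℝ) : ℂ) - ((Real.exp (-T) : ℝ) : ℂ)) * y *
          deriv f (((Real.exp (-T) : ℝ) : ℂ) * y))
        ((((Real.exp T : ℝ) : ℂ) - ((Real.exp (-T) : ℝ) : ℂ)) *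
            deriv f (((Real.exp (-T) : ℝ) : ℂ) * z) +
          (((Real.exp T : ℝ) : ℂ) - ((Real.exp (-T) : ℝ) : ℂ)) * z *
            (deriv (deriv f) (((Real.exp (-T) : ℝ) : ℂ) * z) * ((Real.exp (-T) : ℝ) : ℂ))) z := by
      have ha : HasDerivAt (fun y : ℂ =>
          (((Real.exp T : ℝ) : ℂ) - ((Real.exp (-T) : ℝ) : ℂ)) * y)
          (((Real.exp T : ℝ) : ℂ) - ((Real.exp (-T) : ℝ) : ℂ)) z := by
        have h0 := HasDerivAt.const_mul
          ((((Real.exp T : ℝ) : ℂ) - ((Real.exp (-T) : ℝ) : ℂ))) (hasDerivAt_id z)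
        rwa [mul_one] at h0
      have hb : HasDerivAt (fun y : ℂ => deriv f (((Real.exp (-T) : ℝ) : ℂ) * y))
          (deriv (deriv f) (((Real.exp (-T) : ℝ) : ℂ) * z) * ((Real.exp (-T) : ℝ) : ℂ)) z :=
        (hder2 _ (humem z hz)).comp z hin
      exact ha.mul hb
    exact h₁.add h₂
  · intro z hz
    rw [mem_closedBall_zero_iff, Complex.norm_eq_abs] at hz
    have hBA : ((Real.exp T : ℝ) : ℂ) * ((Real.exp (-T) : ℝ) : ℂ) = 1 := by
      rw [← Complex.ofReal_mul, ← Real.exp_add]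
      norm_num
    have hP : deriv f (((Real.exp (-T) : ℝ) : ℂ) * z) ≠ 0 := hnz _ (humem z hz)
    have hDLeq : DL z = ((Real.exp T : ℝ) : ℂ) *
        (deriv f (((Real.exp (-T) : ℝ) : ℂ) * z) +
          (1 - ((Real.exp (-T) : ℝ) : ℂ) ^ 2) * (((Real.exp (-T) : ℝ) : ℂ) * z) *
            deriv (deriv f) (((Real.exp (-T) : ℝ) : ℂ) * z)) := by
      rw [hDL]
      linear_combination (((Real.exp (-T) : ℝ) : ℂ) ^ 2 * z *
        deriv (deriv f) (((Real.exp (-T) : ℝ) : ℂ) * z)) * hBA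
    rw [hDLeq, Complex.re_ofReal_mul]
    apply mul_pos (Real.exp_pos _)
    -- real part of P + (1-A²) u Q
    have habs1 : Complex.abs (deriv f (((Real.exp (-T) : ℝ) : ℂ) * z) - 1) < 1/4 := by
      have hd : dist (((Real.exp (-T) : ℝ) : ℂ) * z) 0 < δ₁ := by
        rw [Complex.dist_eq, sub_zero]
        exact lt_of_le_of_lt (habsu z hz) hδδ₁
      have := hδ₁ hd
      rwa [h1, Complex.dist_eq] at this
    have habsP : Complex.abs (deriv f (((Real.exp (-T) : ℝ) : ℂ) * z)) ≤ 5/4 := by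
      have h8 : deriv f (((Real.exp (-T) : ℝ) : ℂ) * z) =
          (deriv f (((Real.exp (-T) : ℝ) : ℂ) * z) - 1) + 1 := by ring
      rw [h8]
      calc Complex.abs ((deriv f (((Real.exp (-T) : ℝ) : ℂ) * z) - 1) + 1)
          ≤ Complex.abs (deriv f (((Real.exp (-T) : ℝ) : ℂ) * z) - 1) + Complex.abs 1 :=
            Complex.abs.add_le _ _
        _ ≤ 5/4 := by rw [map_one]; linarith
    have habsQ : Complex.abs (deriv (deriv f) (((Real.exp (-T) : ℝ) : ℂ) * z)) ≤ G * (5/4) := by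
      have h9 : deriv (deriv f) (((Real.exp (-T) : ℝ) : ℂ) * z) =
          bg f (((Real.exp (-T) : ℝ) : ℂ) * z) * deriv f (((Real.exp (-T) : ℝ) : ℂ) * z) := by
        rw [bg]
        exact (div_mul_cancel₀ _ hP).symm
      rw [h9, map_mul]
      apply mul_le_mul (hG _ (le_trans (habsu z hz) hδρ')) habsP (Complex.abs.nonneg _) hG0
    have habsA2 : Complex.abs (1 - ((Real.exp (-T) : ℝ) : ℂ) ^ 2) ≤ 1 := by
      rw [← becker_exp_cast, Complex.abs_ofReal]
      rw [_root_.abs_of_nonneg]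
      · have := Real.exp_pos (-2 * T); linarith
      · have : Real.exp (-2 * T) ≤ 1 := Real.exp_le_one_iff.2 (by linarith)
        linarith
    have hterm : Complex.abs ((1 - ((Real.exp (-T) : ℝ) : ℂ) ^ 2) *
        (((Real.exp (-T) : ℝ) : ℂ) * z) *
        deriv (deriv f) (((Real.exp (-T) : ℝ) : ℂ) * z)) ≤ 5/16 := by
      rw [map_mul, map_mul]
      have hδG2 : δ * G ≤ 1/4 := by
        have h9 : δ * (4 * (G + 1)) ≤ 1 := by
          calc δ * (4 * (G + 1)) ≤ 1 / (4 * (G + 1)) * (4 * (G + 1)) :=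
                mul_le_mul_of_nonneg_right hδG (by positivity)
            _ = 1 := by field_simp
        nlinarith [hδ0]
      calc Complex.abs (1 - ((Real.exp (-T) : ℝ) : ℂ) ^ 2) *
            Complex.abs (((Real.exp (-T) : ℝ) : ℂ) * z) *
            Complex.abs (deriv (deriv f) (((Real.exp (-T) : ℝ) : ℂ) * z))
          ≤ 1 * δ * (G * (5/4)) := by
            apply mul_le_mul _ habsQ (Complex.abs.nonneg _) (by positivity)
            apply mul_le_mul habsA2 (habsu z hz) (Complex.abs.nonneg _) zero_le_one
        _ ≤ 5/16 := by nlinarith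
    -- assemble
    have hsplit : deriv f (((Real.exp (-T) : ℝ) : ℂ) * z) +
        (1 - ((Real.exp (-T) : ℝ) : ℂ) ^ 2) * (((Real.exp (-T) : ℝ) : ℂ) * z) *
          deriv (deriv f) (((Real.exp (-T) : ℝ) : ℂ) * z) =
        1 + ((deriv f (((Real.exp (-T) : ℝ) : ℂ) * z) - 1) +
          (1 - ((Real.exp (-T) : ℝ) : ℂ) ^ 2) * (((Real.exp (-T) : ℝ) : ℂ) * z) *
            deriv (deriv f) (((Real.exp (-T) : ℝ) : ℂ) * z)) := by ring
    rw [hsplit, Complex.add_re, Complex.one_re]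
    set Z := (deriv f (((Real.exp (-T) : ℝ) : ℂ) * z) - 1) +
        (1 - ((Real.exp (-T) : ℝ) : ℂ) ^ 2) * (((Real.exp (-T) : ℝ) : ℂ) * z) *
          deriv (deriv f) (((Real.exp (-T) : ℝ) : ℂ) * z) with hZ
    have habsZ : Complex.abs Z ≤ 1/4 + 5/16 := by
      rw [hZ]
      calc Complex.abs _ ≤ _ := Complex.abs.add_le _ _
        _ ≤ 1/4 + 5/16 := by
            apply add_le_add (le_of_lt habs1) hterm
    have h10 : |Z.re| ≤ Complex.abs Z := Complex.abs_re_le_abs Z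
    have h11 := neg_abs_le Z.re
    linarith

private lemma becker_flow {f : ℂ → ℂ} {k ρ ρ' T : ℝ} {K : NNReal} (hk0 : 0 ≤ k) (hk1 : k < 1)
    (hρ0 : 0 ≤ ρ) (hρρ' : ρ < ρ') (hρ'1 : ρ' < 1) (hT : 0 ≤ T)
    (hqk : ∀ t, 0 ≤ t → ∀ z : ℂ, Complex.abs z ≤ 1 → Complex.abs (bq f t z) ≤ k)
    (hlip : ∀ t, 0 ≤ t → LipschitzOnWith K (bF f t) (closedBall 0 ρ'))
    (hcont : ∀ z : ℂ, Complex.abs z ≤ ρ' → ContinuousOn (fun t => bF f t z) (Ici (0:ℝ)))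
    (a : ℂ) (ha : Complex.abs a ≤ ρ) :
    ∃ w : ℝ → ℂ, w 0 = a ∧ (∀ t ∈ Icc (0:ℝ) T, HasDerivWithinAt w (bF f t (w t)) (Icc 0 T) t)
      ∧ (∀ t ∈ Icc (0:ℝ) T, Complex.abs (w t) ≤ ρ) := by
  have hρ'0 : 0 < ρ' := lt_of_le_of_lt hρ0 hρρ'
  have hsign : ∀ t, (0:ℝ) ≤ t → ∀ z : ℂ, Complex.abs z ≤ 1 →
      z.re * (bF f t z).re + z.im * (bF f t z).im ≤ 0 := by
    intro t ht z hz
    exact becker_sign hk1 (hqk t ht z hz)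
  set C : ℝ := ρ' * (1 + k) / (1 - k) with hC
  have hC0 : 0 < C := by
    rw [hC]
    have : (0:ℝ) < 1 - k := by linarith
    positivity
  set R : ℝ := ρ' - ρ with hR
  have hR0 : 0 < R := by rw [hR]; linarith
  set h : ℝ := R / C with hh
  have hh0 : 0 < h := by positivity
  -- single Picard-Lindelöf step
  have SL : ∀ t₀ : ℝ, 0 ≤ t₀ → ∀ x₀ : ℂ, Complex.abs x₀ ≤ ρ →
      ∃ v : ℝ → ℂ, v t₀ = x₀ ∧ ∀ t ∈ Icc t₀ (t₀ + h),
        HasDerivWithinAt v (bF f t (v t)) (Icc t₀ (t₀ + h)) t := by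
    intro t₀ ht₀ x₀ hx₀
    have hsub : closedBall x₀ R ⊆ closedBall (0:ℂ) ρ' := by
      intro y hy
      rw [mem_closedBall] at hy ⊢
      calc dist y 0 ≤ dist y x₀ + dist x₀ 0 := dist_triangle _ _ _
        _ ≤ R + ρ := by
            apply add_le_add hy
            rw [Complex.dist_eq, sub_zero]; exact hx₀
        _ = ρ' := by rw [hR]; ring
    have hpl : IsPicardLindelof (bF f) (tmin := t₀) (tmax := t₀ + h) ⟨t₀, le_refl _, by linarith⟩
        x₀ (Real.toNNReal R) 0 (Real.toNNReal C) K :=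
      { lipschitzOnWith := fun t ht => by
          rw [Real.coe_toNNReal _ hR0.le]
          exact ((hlip t (le_trans ht₀ ht.1)).mono hsub)
        continuousOn := fun x hx => by
          rw [Real.coe_toNNReal _ hR0.le] at hx
          have hx' : Complex.abs x ≤ ρ' := by
            have := hsub hx
            rwa [mem_closedBall_zero_iff, Complex.norm_eq_abs] at this
          exact (hcont x hx').mono (fun t ht => le_trans ht₀ ht.1)
        norm_le := fun t ht x hx => by
          rw [Real.coe_toNNReal _ hR0.le] at hx
          have hx' : Complex.abs x ≤ ρ' := by
            have := hsub hx
            rwa [mem_closedBall_zero_iff, Complex.norm_eq_abs] at this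
          rw [Real.coe_toNNReal _ hC0.le, Complex.norm_eq_abs, bF]
          exact becker_absF hk0 hk1 (hqk t (le_trans ht₀ ht.1) x (le_trans hx' (le_of_lt hρ'1)))
            hx'
        mul_max_le := by
          show (Real.toNNReal C : ℝ) * max (t₀ + h - t₀) (t₀ - t₀) ≤
            (Real.toNNReal R : ℝ) - ((0 : NNReal) : ℝ)
          rw [Real.coe_toNNReal _ hC0.le, Real.coe_toNNReal _ hR0.le, NNReal.coe_zero, sub_zero]
          rw [add_sub_cancel_left, sub_self, max_eq_left (le_of_lt hh0), hh]
          rw [mul_div_cancel₀]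
          exact (ne_of_gt hC0) }
    exact hpl.exists_eq_forall_mem_Icc_hasDerivWithinAt₀
  -- glued solutions up to min (n*h) T
  have main : ∀ n : ℕ, ∃ w : ℝ → ℂ, w 0 = a ∧
      ∀ t ∈ Icc (0:ℝ) (min (n * h) T),
        HasDerivWithinAt w (bF f t (w t)) (Icc 0 (min (n * h) T)) t := by
    intro n
    induction n with
    | zero =>
      obtain ⟨v, hv0, hvd⟩ := SL 0 (le_refl 0) a ha
      refine ⟨v, hv0, ?_⟩
      have hmin : min ((0:ℕ) * h) T = 0 := by
        simp [min_eq_left hT]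
      rw [hmin]
      intro t ht
      have ht0 : t = 0 := le_antisymm ht.2 ht.1
      subst ht0
      exact (hvd 0 ⟨le_refl 0, by linarith⟩).mono
        (by intro y hy; exact ⟨hy.1, by
          have : y = 0 := le_antisymm hy.2 hy.1
          rw [this]; linarith⟩)
    | succ n ih =>
      obtain ⟨w, hw0, hwd⟩ := ih
      rcases le_or_gt T (n * h) with hcase | hcase
      · have e1 : min ((n:ℝ) * h) T = T := min_eq_right hcase
        have e2 : min (((n:ℕ).succ : ℝ) * h) T = T := by
          apply min_eq_right
          refine le_trans hcase ?_
          push_cast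
          nlinarith [hh0]
        rw [e1] at hwd
        rw [e2]
        exact ⟨w, hw0, hwd⟩
      · have hTn : min ((n:ℝ) * h) T = (n:ℝ) * h := min_eq_left (le_of_lt hcase)
        set Tn : ℝ := (n:ℝ) * h with hTndef
        have hTn0 : 0 ≤ Tn := by positivity
        rw [hTn] at hwd
        -- norm bound on [0, Tn]
        have habsn : ∀ t ∈ Icc (0:ℝ) Tn, Complex.abs (w t) ≤ ρ := by
          apply becker_invariance (le_refl 0) hTn0 hρ0 hρρ' (le_of_lt hρ'1)
            (fun t ht => hsign t ht) hwd
          rw [hw0]; exact ha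
        set Tn1 : ℝ := min (((n:ℕ).succ : ℝ) * h) T with hTn1def
        have hTnTn1 : Tn ≤ Tn1 := by
          apply le_min _ (le_of_lt hcase)
          push_cast
          nlinarith [hh0]
        have hTn1h : Tn1 ≤ Tn + h := by
          refine le_trans (min_le_left _ _) ?_
          push_cast
          nlinarith [hh0]
        obtain ⟨v, hv0, hvd⟩ := SL Tn hTn0 (w Tn) (habsn Tn ⟨hTn0, le_refl _⟩)
        set w' : ℝ → ℂ := fun t => if t ≤ Tn then w t else v t with hw'def
        have hw'0 : w' 0 = a := by
          rw [hw'def]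
          simp only [if_pos hTn0]
          exact hw0
        refine ⟨w', hw'0, ?_⟩
        intro t ht
        rcases lt_trichotomy t Tn with hlt | heq | hgt
        · -- t < Tn
          have hmem : Icc (0:ℝ) Tn ∈ nhdsWithin t (Icc 0 Tn1) :=
            mem_nhdsWithin.2 ⟨Iio Tn, isOpen_Iio, hlt, fun y hy => ⟨hy.2.1, le_of_lt hy.1⟩⟩
          have h1 : HasDerivWithinAt w (bF f t (w t)) (Icc 0 Tn1) t :=
            (hwd t ⟨ht.1, le_of_lt hlt⟩).mono_of_mem_nhdsWithin hmem
          have hev : ∀ᶠ y in nhdsWithin t (Icc 0 Tn1), w' y = w y := by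
            filter_upwards [mem_nhdsWithin.2 ⟨Iio Tn, isOpen_Iio, hlt,
              fun y (hy : y ∈ Iio Tn ∩ Icc 0 Tn1) => hy⟩] with y hy
            exact if_pos (le_of_lt hy.1)
          have hwt : w' t = w t := if_pos (le_of_lt hlt)
          rw [hwt]
          exact h1.congr_of_eventuallyEq hev hwt
        · -- t = Tn
          subst heq
          have hL : HasDerivWithinAt w' (bF f Tn (w Tn)) (Icc 0 Tn) Tn := by
            apply (hwd Tn ⟨hTn0, le_refl _⟩).congr_of_eventuallyEq
            · exact Filter.eventually_of_mem self_mem_nhdsWithin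
                (fun y (hy : y ∈ Icc (0:ℝ) Tn) => if_pos hy.2)
            · exact if_pos (le_refl Tn)
          have hR' : HasDerivWithinAt w' (bF f Tn (w Tn)) (Icc Tn Tn1) Tn := by
            have h2 : HasDerivWithinAt v (bF f Tn (v Tn)) (Icc Tn Tn1) Tn :=
              (hvd Tn ⟨le_refl _, by linarith⟩).mono (Icc_subset_Icc_right hTn1h)
            rw [hv0] at h2
            apply h2.congr_of_eventuallyEq
            · apply Filter.eventually_of_mem self_mem_nhdsWithin
              intro y (hy : y ∈ Icc Tn Tn1)
              rcases eq_or_lt_of_le hy.1 with hy1 | hy1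
              · rw [hw'def]
                simp only [← hy1, if_pos (le_refl Tn)]
                exact hv0.symm
              · rw [hw'def]
                simp only [if_neg (not_le.2 hy1)]
            · rw [hw'def]
              simp only [if_pos (le_refl Tn)]
              exact hv0.symm
          have huni := hL.union hR'
          rw [Icc_union_Icc_eq_Icc hTn0 hTnTn1] at huni
          have hwt : w' Tn = w Tn := if_pos (le_refl Tn)
          rw [hwt]
          exact huni
        · -- t > Tn
          have hmem : Icc Tn (Tn + h) ∈ nhdsWithin t (Icc 0 Tn1) :=
            mem_nhdsWithin.2 ⟨Ioi Tn, isOpen_Ioi, hgt,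
              fun y hy => ⟨le_of_lt hy.1, le_trans hy.2.2 hTn1h⟩⟩
          have h1 : HasDerivWithinAt v (bF f t (v t)) (Icc 0 Tn1) t :=
            (hvd t ⟨le_of_lt hgt, le_trans ht.2 hTn1h⟩).mono_of_mem_nhdsWithin hmem
          have hev : ∀ᶠ y in nhdsWithin t (Icc 0 Tn1), w' y = v y := by
            filter_upwards [mem_nhdsWithin.2 ⟨Ioi Tn, isOpen_Ioi, hgt,
              fun y (hy : y ∈ Ioi Tn ∩ Icc 0 Tn1) => hy⟩] with y hy
            exact if_neg (not_le.2 hy.1)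
          have hwt : w' t = v t := if_neg (not_le.2 hgt)
          rw [hwt]
          exact h1.congr_of_eventuallyEq hev hwt
  -- conclude
  obtain ⟨w, hw0, hwd⟩ := main ⌈T / h⌉₊
  have hceil : min ((⌈T / h⌉₊ : ℝ) * h) T = T := by
    apply min_eq_right
    calc T = T / h * h := by field_simp
      _ ≤ (⌈T / h⌉₊ : ℝ) * h := by
          apply mul_le_mul_of_nonneg_right (Nat.le_ceil _) (le_of_lt hh0)
  rw [hceil] at hwd
  refine ⟨w, hw0, hwd, ?_⟩
  apply becker_invariance (le_refl 0) hT hρ0 hρρ' (le_of_lt hρ'1)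
    (fun t ht => hsign t ht) hwd
  rw [hw0]; exact ha

/-- Becker's univalence criterion: let `f` be holomorphic on the unit disk with
`f 0 = 0`, `f' 0 = 1`, and `f' z ≠ 0` on `𝔻`.  If there is `0 ≤ k < 1` with
`(1 − |z|²)·|z f''(z)/f'(z)| ≤ k` for all `z ∈ 𝔻`, then `f` is injective on `𝔻`. -/
theorem becker_univalence (f : ℂ → ℂ) (hf : DifferentiableOn ℂ f (Metric.ball 0 1))
    (h0 : f 0 = 0) (h1 : deriv f 0 = 1)
    (hnz : ∀ z ∈ Metric.ball (0 : ℂ) 1, deriv f z ≠ 0)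
    (k : ℝ) (hk0 : 0 ≤ k) (hk1 : k < 1)
    (hbd : ∀ z ∈ Metric.ball (0 : ℂ) 1,
      (1 - ‖z‖ ^ 2) * ‖z * deriv (deriv f) z / deriv f z‖ ≤ k) :
    Set.InjOn f (Metric.ball 0 1) := by
  have hfa : AnalyticOnNhd ℂ f (Metric.ball 0 1) := hf.analyticOnNhd isOpen_ball
  have hder1 : ∀ z ∈ Metric.ball (0:ℂ) 1, HasDerivAt f (deriv f z) z :=
    fun z hz => ((hfa z hz).differentiableAt).hasDerivAt
  have hder2 : ∀ z ∈ Metric.ball (0:ℂ) 1, HasDerivAt (deriv f) (deriv (deriv f) z) z :=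
    fun z hz => ((hfa.deriv z hz).differentiableAt).hasDerivAt
  have hgc : ContinuousOn (bg f) (Metric.ball 0 1) :=
    ((hfa.deriv.deriv).continuousOn).div (hfa.deriv.continuousOn) hnz
  intro a ha b hb hfab
  by_contra hne
  have haa : Complex.abs a < 1 := by rwa [mem_ball_zero_iff, Complex.norm_eq_abs] at ha
  have hbb : Complex.abs b < 1 := by rwa [mem_ball_zero_iff, Complex.norm_eq_abs] at hb
  set ρ : ℝ := max (Complex.abs a) (Complex.abs b) with hρdef
  have hρ0 : 0 ≤ ρ := le_trans (Complex.abs.nonneg a) (le_max_left _ _)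
  have hρ1 : ρ < 1 := max_lt haa hbb
  set ρ' : ℝ := (1 + ρ) / 2 with hρ'def
  have hρρ' : ρ < ρ' := by rw [hρ'def]; linarith
  have hρ'1 : ρ' < 1 := by rw [hρ'def]; linarith
  have hqk := becker_hq hk0 hbd
  obtain ⟨G, hGbd⟩ := (isCompact_closedBall (0:ℂ) ρ').exists_bound_of_continuousOn
    (hgc.mono (closedBall_subset_ball hρ'1))
  have hG : ∀ z : ℂ, Complex.abs z ≤ ρ' → Complex.abs (bg f z) ≤ G := by
    intro z hz
    rw [← Complex.norm_eq_abs]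
    exact hGbd z (by rwa [mem_closedBall_zero_iff, Complex.norm_eq_abs])
  obtain ⟨Lh, hLh0, hLh⟩ := becker_exists_Lh hρ'1 hf hnz
  obtain ⟨K, hlip⟩ := becker_lip hk0 hk1 (le_of_lt hρ'1) hLh0 hqk hLh
  have hcont : ∀ z : ℂ, Complex.abs z ≤ ρ' →
      ContinuousOn (fun t => bF f t z) (Ici (0:ℝ)) :=
    fun z hz => becker_cont hk1 hρ'1 hgc hqk z hz
  obtain ⟨T, hT0, hinj⟩ := becker_LT_inj hρ0 hρρ' hρ'1 hder1 hder2 hnz h1 hG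
  obtain ⟨wa, hwa0, hwad, hwab⟩ := becker_flow hk0 hk1 hρ0 hρρ' hρ'1 hT0 hqk hlip hcont a
    (le_max_left _ _)
  obtain ⟨wb, hwb0, hwbd, hwbb⟩ := becker_flow hk0 hk1 hρ0 hρρ' hρ'1 hT0 hqk hlip hcont b
    (le_max_right _ _)
  have hL0 : ∀ z : ℂ, bL f 0 z = f z := by
    intro z
    rw [bL]
    norm_num
  have hconsta : bL f T (wa T) = bL f 0 (wa 0) :=
    becker_const hk1 hT0 hρ1 hder1 hder2 hnz hqk hwad hwab
  have hconstb : bL f T (wb T) = bL f 0 (wb 0) :=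
    becker_const hk1 hT0 hρ1 hder1 hder2 hnz hqk hwbd hwbb
  have hkey : bL f T (wa T) = bL f T (wb T) := by
    rw [hconsta, hconstb, hL0, hL0, hwa0, hwb0, hfab]
  have hmema : wa T ∈ closedBall (0:ℂ) ρ := by
    rw [mem_closedBall_zero_iff, Complex.norm_eq_abs]
    exact hwab T ⟨hT0, le_refl T⟩
  have hmemb : wb T ∈ closedBall (0:ℂ) ρ := by
    rw [mem_closedBall_zero_iff, Complex.norm_eq_abs]
    exact hwbb T ⟨hT0, le_refl T⟩
  have heqT : wa T = wb T := hinj hmema hmemb hkey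
  -- backward uniqueness of the ODE
  have hmemflow : ∀ (w : ℝ → ℂ), (∀ t ∈ Icc (0:ℝ) T, Complex.abs (w t) ≤ ρ) →
      ∀ t ∈ Ioc (0:ℝ) T, w t ∈ closedBall (0:ℂ) ρ' := by
    intro w hw t ht
    rw [mem_closedBall_zero_iff, Complex.norm_eq_abs]
    exact le_trans (hw t ⟨le_of_lt ht.1, ht.2⟩) (le_of_lt hρρ')
  have hderflow : ∀ (w : ℝ → ℂ),
      (∀ t ∈ Icc (0:ℝ) T, HasDerivWithinAt w (bF f t (w t)) (Icc 0 T) t) →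
      ∀ t ∈ Ioc (0:ℝ) T, HasDerivWithinAt w (bF f (max t 0) (w t)) (Iic t) t := by
    intro w hw t ht
    have hmax : max t 0 = t := max_eq_left (le_of_lt ht.1)
    rw [hmax]
    exact (hw t ⟨le_of_lt ht.1, ht.2⟩).mono_of_mem_nhdsWithin
      (mem_nhdsWithin.2 ⟨Ioi 0, isOpen_Ioi, ht.1,
        fun y hy => ⟨le_of_lt hy.1, le_trans hy.2 ht.2⟩⟩)
  have huniq : EqOn wa wb (Icc (0:ℝ) T) := by
    apply ODE_solution_unique_of_mem_Icc_left
      (v := fun t z => bF f (max t 0) z) (s := fun _ => closedBall (0:ℂ) ρ')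
      (K := K) (fun t _ => hlip (max t 0) (le_max_right _ _))
      (fun t ht => (hwad t ht).continuousWithinAt)
      (hderflow wa hwad) (hmemflow wa hwab)
      (fun t ht => (hwbd t ht).continuousWithinAt)
      (hderflow wb hwbd) (hmemflow wb hwbb) heqT
  have : a = b := by
    have h9 := huniq ⟨le_refl (0:ℝ), hT0⟩
    rwa [hwa0, hwb0] at h9
  exact hne this

end
end
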